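/- arXiv:math/0507336 — 5 statements merged into one kernel-verified Lean document; each statement's English description precedes it below -/
import Mathlib

section
/- Let n be a positive integer and let π be a noncrossing partition of {1,...,2n} in which every block has even cardinality. If no block of π has an even minimum, then for every even k in {1,...,2n}, the elements k-1 and k lie in the same block of π. -/
/- Partitions of {1,…,n} encoded as finite sets of blocks. -/

/-- `π` is a partition of `{1,…,n}`: blocks are nonempty subsets of `Finset.Icc 1 n`
and every element of `{1,…,n}` lies in exactly one block. -/
def IsPartitionOn (n : ℕ) (π : Finset (Finset ℕ)) : Prop :=
  (∀ B ∈ π, B.Nonempty) ∧ (∀ B ∈ π, B ⊆ Finset.Icc 1 n) ∧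
    ∀ i ∈ Finset.Icc 1 n, ∃! B, B ∈ π ∧ i ∈ B

/-- `π` is noncrossing: there are no `a < b < c < d` with `a, c` in a block `B` and
`b, d` in a different block `B'`. -/
def IsNoncrossing (π : Finset (Finset ℕ)) : Prop :=
  ∀ B ∈ π, ∀ B' ∈ π, ∀ a ∈ B, ∀ c ∈ B, ∀ b ∈ B', ∀ d ∈ B',
    a < b → b < c → c < d → B = B'

/-- The minimum of a block (junk value `0` for the empty block). -/
def blockMin (B : Finset ℕ) : ℕ := WithTop.untopD 0 B.min

/-- `π ∈ NC'(n)`: a noncrossing partition of `{1,…,n}` all of whose blocks have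
even cardinality.  (`NC'(2n)` of the paper is `IsNCEven (2*n)`.) -/
def IsNCEven (n : ℕ) (π : Finset (Finset ℕ)) : Prop :=
  IsPartitionOn n π ∧ IsNoncrossing π ∧ ∀ B ∈ π, Even B.card

/-- if `π ∈ NC'(2n)` has no block with even minimum, then for every
even `k ∈ {1,…,2n}`, the elements `k-1` and `k` lie in the same block of `π`. -/
theorem nc_even_no_even_min_pairs (n : ℕ) (hn : 0 < n) (π : Finset (Finset ℕ))
    (hπ : IsNCEven (2 * n) π)
    (hmin : ∀ B ∈ π, ¬ Even (blockMin B)) :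
    ∀ k, 1 ≤ k → k ≤ 2 * n → Even k → ∃ B ∈ π, k - 1 ∈ B ∧ k ∈ B := by
  obtain ⟨⟨hne, hsub, hcov⟩, hnc, hev⟩ := hπ
  have huniq : ∀ B ∈ π, ∀ B' ∈ π, ∀ x, x ∈ B → x ∈ B' → B = B' := by
    intro B hB B' hB' x hxB hxB'
    obtain ⟨C, _, hCu⟩ := hcov x (hsub B hB hxB)
    exact (hCu B ⟨hB, hxB⟩).trans (hCu B' ⟨hB', hxB'⟩).symm
  have hmem : ∀ B ∈ π, ∀ x ∈ B, 1 ≤ x ∧ x ≤ 2*n := by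
    intro B hB x hx
    simpa [Finset.mem_Icc] using hsub B hB hx
  have hmin_spec : ∀ B ∈ π, blockMin B ∈ B ∧ ∀ x ∈ B, blockMin B ≤ x := by
    intro B hB
    have hne' := hne B hB
    have hcoe : ((B.min' hne' : ℕ) : WithTop ℕ) = B.min := Finset.coe_min' hne'
    have hbm : blockMin B = B.min' hne' := by
      rw [blockMin, ← hcoe]
      exact WithTop.untopD_coe 0 _
    rw [hbm]
    exact ⟨B.min'_mem hne', fun x hx => B.min'_le x hx⟩
  intro k
  induction k using Nat.strong_induction_on with
  | _ k IH =>
  intro hk1 hk2 hke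
  have hk2' : 2 ≤ k := by obtain ⟨t, ht⟩ := hke; omega
  set p := k - 1 with hp
  have hpk : p + 1 = k := by omega
  have hkodd_p : ¬ Even p := by
    obtain ⟨t, ht⟩ := hke
    intro ⟨s, hs⟩; omega
  obtain ⟨B', hB', hpB'⟩ := (hcov p (by simp [Finset.mem_Icc]; omega)).exists
  refine ⟨B', hB', hpB', ?_⟩
  by_contra hkB'
  obtain ⟨B, hB, hkB⟩ := (hcov k (by simp [Finset.mem_Icc]; omega)).exists
  obtain ⟨hmB, hmle⟩ := hmin_spec B hB
  set m := blockMin B with hm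
  have hmodd : ¬ Even m := hmin B hB
  have hmk : m ≠ k := fun h => hmodd (h ▸ hke)
  have hmp : m ≠ p := by
    intro h
    exact hkB' ((huniq B hB B' hB' p (h ▸ hmB) hpB') ▸ hkB)
  have hmltp : m < p := by have := hmle k hkB; omega
  have hcross : ∀ d ∈ B', k < d → False := by
    intro d hd hkd
    have hBB' := hnc B hB B' hB' m hmB k hkB p hpB' d hd hmltp (by omega) hkd
    exact hkB' (hBB' ▸ hkB)
  obtain ⟨hm'B', hm'le⟩ := hmin_spec B' hB'
  set m' := blockMin B' with hm'
  have hm'odd : ¬ Even m' := hmin B' hB'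
  have hm'p : m' ≤ p := hm'le p hpB'
  rcases eq_or_lt_of_le hm'p with heq | hlt
  · -- m' = p : B' has another element d > p, hence d > k, crossing
    have hcard : 2 ≤ B'.card := by
      have h1 : 0 < B'.card := Finset.card_pos.mpr (hne B' hB')
      obtain ⟨t, ht⟩ := hev B' hB'
      omega
    have hcard1 : 1 < B'.card := by omega
    obtain ⟨d, hd, hdp⟩ := Finset.exists_mem_ne hcard1 p
    have hdm : m' ≤ d := hm'le d hd
    have hdk : d ≠ k := fun h => hkB' (h ▸ hd)
    exact hcross d hd (by omega)
  · -- m' < p : parity contradiction on B'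
    have hEstep : ∀ x ∈ B', Even x → x - 1 ∈ B' ∧ 1 ≤ x - 1 ∧ ¬ Even (x-1) ∧ x - 1 ≠ p := by
      intro x hx hxe
      have hx12 := hmem B' hB' x hx
      have hxk : x ≠ k := fun h => hkB' (h ▸ hx)
      have hxltk : x < k := by
        by_contra h
        exact hcross x hx (by omega)
      obtain ⟨C, hC, hx1C, hxC⟩ := IH x hxltk hx12.1 hx12.2 hxe
      have hCB' : C = B' := huniq C hC B' hB' x hxC hx
      have hx2 : 2 ≤ x := by obtain ⟨t, ht⟩ := hxe; omega
      refine ⟨hCB' ▸ hx1C, by omega, ?_, ?_⟩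
      · obtain ⟨t, ht⟩ := hxe; intro ⟨s, hs⟩; omega
      · intro h; exact hxk (by omega)
    have hOstep : ∀ x ∈ B', ¬ Even x → x ≠ p → x + 1 ∈ B' ∧ Even (x+1) := by
      intro x hx hxo hxp
      have hx12 := hmem B' hB' x hx
      have hxk : x ≠ k := fun h => hxo (h ▸ hke)
      have hxltp : x < p := by
        by_contra h
        exact hcross x hx (by omega)
      have hxe1 : Even (x+1) := by
        rcases Nat.even_or_odd x with he | ho
        · exact absurd he hxo
        · obtain ⟨t, ht⟩ := ho; exact ⟨t+1, by omega⟩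
      obtain ⟨C, hC, hx1C, hxC⟩ := IH (x+1) (by omega) (by omega) (by omega) hxe1
      have : x + 1 - 1 = x := by omega
      rw [this] at hx1C
      have hCB' : C = B' := huniq C hC B' hB' x hx1C hx
      exact ⟨hCB' ▸ hxC, hxe1⟩
    set O := B'.filter (fun x => ¬ Even x ∧ x ≠ p) with hO
    set E := B'.filter (fun x => Even x) with hE
    have hcardOE : O.card = E.card := by
      refine Finset.card_bij (fun x _ => x + 1) ?_ ?_ ?_
      · intro a ha
        rw [hO, Finset.mem_filter] at ha
        obtain ⟨h1, h2⟩ := hOstep a ha.1 ha.2.1 ha.2.2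
        rw [hE, Finset.mem_filter]
        exact ⟨h1, h2⟩
      · intro a _ b _ h
        have h' : a + 1 = b + 1 := h
        omega
      · intro b hb
        rw [hE, Finset.mem_filter] at hb
        obtain ⟨h1, h2, h3, h4⟩ := hEstep b hb.1 hb.2
        have hbmem : b - 1 ∈ O := by
          rw [hO, Finset.mem_filter]; exact ⟨h1, h3, h4⟩
        exact ⟨b - 1, hbmem, show b - 1 + 1 = b by omega⟩
    have hdecomp : B' = insert p (O ∪ E) := by
      ext x
      simp only [Finset.mem_insert, Finset.mem_union, hO, hE, Finset.mem_filter]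
      constructor
      · intro hx
        by_cases hxe : Even x
        · exact Or.inr (Or.inr ⟨hx, hxe⟩)
        · by_cases hxp : x = p
          · exact Or.inl hxp
          · exact Or.inr (Or.inl ⟨hx, hxe, hxp⟩)
      · rintro (rfl | ⟨h, -⟩ | ⟨h, -⟩)
        · exact hpB'
        · exact h
        · exact h
    have hpnot : p ∉ O ∪ E := by
      simp [hO, hE, Finset.mem_filter, hkodd_p]
    have hdisj : Disjoint O E := by
      rw [Finset.disjoint_left]
      intro x hx1 hx2
      rw [hO, Finset.mem_filter] at hx1
      rw [hE, Finset.mem_filter] at hx2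
      exact hx1.2.1 hx2.2
    have hcardB' : B'.card = O.card + E.card + 1 := by
      rw [hdecomp, Finset.card_insert_of_notMem hpnot, Finset.card_union_of_disjoint hdisj]
    have hevB' := hev B' hB'
    rw [hcardB', hcardOE] at hevB'
    obtain ⟨t, ht⟩ := hevB'
    omega
end

section
/- Let c be the cyclic permutation of {1,...,2n} sending j to j-1 (and 1 to 2n). Then R(π) := {c(B) : B ∈ π} defines a permutation of NC'(2n), and for every π ∈ NC'(2n), the number of blocks of R(π) with odd minimum equals the number of blocks of π with even minimum plus 1. -/
open scoped Classical

/-- `e(π)`: number of blocks of `π` with even minimum. -/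
noncomputable def evenMinCount (π : Finset (Finset ℕ)) : ℕ :=
  (π.filter fun B => Even (blockMin B)).card

/-- `o(π)`: number of blocks of `π` with odd minimum. -/
noncomputable def oddMinCount (π : Finset (Finset ℕ)) : ℕ :=
  (π.filter fun B => ¬ Even (blockMin B)).card

/-- The cyclic permutation `c` of `{1,…,2n}` sending `j` to `j-1` and `1` to `2n`. -/
def cyc (n j : ℕ) : ℕ := if j = 1 then 2 * n else j - 1

/-- `R(π) = {c(B) : B ∈ π}`. -/
def Rmap (n : ℕ) (π : Finset (Finset ℕ)) : Finset (Finset ℕ) :=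
  π.image fun B => B.image (cyc n)

/-! ### Auxiliary material -/

open Finset

/-- The inverse cyclic permutation. -/
def icyc (n j : ℕ) : ℕ := if j = 2 * n then 1 else j + 1

/-- `S(π) = {c⁻¹(B) : B ∈ π}`. -/
def Smap (n : ℕ) (π : Finset (Finset ℕ)) : Finset (Finset ℕ) :=
  π.image fun B => B.image (icyc n)

lemma cyc_one (n : ℕ) : cyc n 1 = 2 * n := if_pos rfl

lemma cyc_of_ne {n j : ℕ} (h : j ≠ 1) : cyc n j = j - 1 := if_neg h

lemma icyc_top (n : ℕ) : icyc n (2 * n) = 1 := if_pos rfl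

lemma icyc_of_ne {n j : ℕ} (h : j ≠ 2 * n) : icyc n j = j + 1 := if_neg h

lemma cyc_mem {n j : ℕ} (hn : 0 < n) (hj : j ∈ Finset.Icc 1 (2 * n)) :
    cyc n j ∈ Finset.Icc 1 (2 * n) := by
  rw [mem_Icc] at *
  unfold cyc; split <;> omega

lemma icyc_mem {n j : ℕ} (hn : 0 < n) (hj : j ∈ Finset.Icc 1 (2 * n)) :
    icyc n j ∈ Finset.Icc 1 (2 * n) := by
  rw [mem_Icc] at *
  unfold icyc; split <;> omega

lemma icyc_cyc {n j : ℕ} (hj : j ∈ Finset.Icc 1 (2 * n)) : icyc n (cyc n j) = j := by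
  rw [mem_Icc] at hj
  unfold cyc icyc; split_ifs <;> omega

lemma cyc_icyc {n j : ℕ} (hj : j ∈ Finset.Icc 1 (2 * n)) : cyc n (icyc n j) = j := by
  rw [mem_Icc] at hj
  unfold cyc icyc; split_ifs <;> omega

section transport

variable {N : ℕ} {f g : ℕ → ℕ}
  (hf : ∀ j ∈ Finset.Icc 1 N, f j ∈ Finset.Icc 1 N)
  (hg : ∀ j ∈ Finset.Icc 1 N, g j ∈ Finset.Icc 1 N)
  (hgf : ∀ j ∈ Finset.Icc 1 N, g (f j) = j)
  (hfg : ∀ j ∈ Finset.Icc 1 N, f (g j) = j)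

include hgf in
lemma image_image_cancel {B : Finset ℕ} (hB : B ⊆ Finset.Icc 1 N) :
    (B.image f).image g = B := by
  rw [Finset.image_image]
  have : Finset.image (g ∘ f) B = Finset.image id B := by
    apply Finset.image_congr
    intro x hx
    exact hgf x (hB hx)
  rw [this, Finset.image_id]

include hgf in
lemma image_inj_of_sub {B B' : Finset ℕ} (hB : B ⊆ Finset.Icc 1 N)
    (hB' : B' ⊆ Finset.Icc 1 N) (h : B.image f = B'.image f) : B = B' := by
  have := congrArg (Finset.image g) h
  rwa [image_image_cancel hgf hB, image_image_cancel hgf hB'] at this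

include hf hg hgf hfg in
lemma IsPartitionOn.image_transport {π : Finset (Finset ℕ)} (hπ : IsPartitionOn N π) :
    IsPartitionOn N (π.image fun B => B.image f) := by
  obtain ⟨h1, h2, h3⟩ := hπ
  refine ⟨?_, ?_, ?_⟩
  · intro C hC
    obtain ⟨B, hB, rfl⟩ := Finset.mem_image.mp hC
    exact (h1 B hB).image f
  · intro C hC x hx
    obtain ⟨B, hB, rfl⟩ := Finset.mem_image.mp hC
    obtain ⟨y, hy, rfl⟩ := Finset.mem_image.mp hx
    exact hf y (h2 B hB hy)
  · intro i hi
    obtain ⟨B, ⟨hB, hgiB⟩, huniq⟩ := h3 (g i) (hg i hi)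
    refine ⟨B.image f, ⟨Finset.mem_image_of_mem _ hB, ?_⟩, ?_⟩
    · have h := hfg i hi
      exact h ▸ Finset.mem_image_of_mem f hgiB
    · rintro C ⟨hC, hiC⟩
      obtain ⟨B', hB', rfl⟩ := Finset.mem_image.mp hC
      obtain ⟨x, hxB', hfx⟩ := Finset.mem_image.mp hiC
      have hx : x ∈ Finset.Icc 1 N := h2 B' hB' hxB'
      have hgi : g i = x := by rw [← hfx, hgf x hx]
      have hBB : B' = B := huniq B' ⟨hB', by rw [hgi]; exact hxB'⟩
      rw [hBB]

end transport

lemma nc_Rmap {n : ℕ} (hn : 0 < n) {π : Finset (Finset ℕ)}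
    (hpart : IsPartitionOn (2 * n) π) (hnc : IsNoncrossing π) :
    IsNoncrossing (Rmap n π) := by
  rintro C hC C' hC' a ha c hc b hb d hd hab hbc hcd
  obtain ⟨B, hB, rfl⟩ := Finset.mem_image.mp hC
  obtain ⟨B', hB', rfl⟩ := Finset.mem_image.mp hC'
  obtain ⟨a₀, ha₀, rfl⟩ := Finset.mem_image.mp ha
  obtain ⟨c₀, hc₀, rfl⟩ := Finset.mem_image.mp hc
  obtain ⟨b₀, hb₀, rfl⟩ := Finset.mem_image.mp hb
  obtain ⟨d₀, hd₀, rfl⟩ := Finset.mem_image.mp hd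
  have hIa := Finset.mem_Icc.mp (hpart.2.1 B hB ha₀)
  have hIc := Finset.mem_Icc.mp (hpart.2.1 B hB hc₀)
  have hIb := Finset.mem_Icc.mp (hpart.2.1 B' hB' hb₀)
  have hId := Finset.mem_Icc.mp (hpart.2.1 B' hB' hd₀)
  have hub : ∀ x : ℕ, 1 ≤ x → x ≤ 2 * n → cyc n x ≤ 2 * n := by
    intro x h1 h2; unfold cyc; split <;> omega
  suffices h : B = B' by rw [h]
  have ha1 : a₀ ≠ 1 := by
    intro h
    rw [h, cyc_one] at hab
    have h1 := hub b₀ hIb.1 hIb.2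
    omega
  have hb1 : b₀ ≠ 1 := by
    intro h
    rw [h, cyc_one] at hbc
    have h1 := hub c₀ hIc.1 hIc.2
    omega
  have hc1 : c₀ ≠ 1 := by
    intro h
    rw [h, cyc_one] at hcd
    have h1 := hub d₀ hId.1 hId.2
    omega
  rw [cyc_of_ne ha1, cyc_of_ne hb1] at hab
  rw [cyc_of_ne hb1, cyc_of_ne hc1] at hbc
  rw [cyc_of_ne hc1] at hcd
  by_cases hd1 : d₀ = 1
  · have hd₀' : (1 : ℕ) ∈ B' := hd1 ▸ hd₀
    exact (hnc B' hB' B hB 1 hd₀' b₀ hb₀ a₀ ha₀ c₀ hc₀ (by omega) (by omega) (by omega)).symm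
  · rw [cyc_of_ne hd1] at hcd
    exact hnc B hB B' hB' a₀ ha₀ c₀ hc₀ b₀ hb₀ d₀ hd₀ (by omega) (by omega) (by omega)

lemma nc_Smap {n : ℕ} (hn : 0 < n) {π : Finset (Finset ℕ)}
    (hpart : IsPartitionOn (2 * n) π) (hnc : IsNoncrossing π) :
    IsNoncrossing (Smap n π) := by
  rintro C hC C' hC' a ha c hc b hb d hd hab hbc hcd
  obtain ⟨B, hB, rfl⟩ := Finset.mem_image.mp hC
  obtain ⟨B', hB', rfl⟩ := Finset.mem_image.mp hC'
  obtain ⟨a₀, ha₀, rfl⟩ := Finset.mem_image.mp ha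
  obtain ⟨c₀, hc₀, rfl⟩ := Finset.mem_image.mp hc
  obtain ⟨b₀, hb₀, rfl⟩ := Finset.mem_image.mp hb
  obtain ⟨d₀, hd₀, rfl⟩ := Finset.mem_image.mp hd
  have hIa := Finset.mem_Icc.mp (hpart.2.1 B hB ha₀)
  have hIc := Finset.mem_Icc.mp (hpart.2.1 B hB hc₀)
  have hIb := Finset.mem_Icc.mp (hpart.2.1 B' hB' hb₀)
  have hId := Finset.mem_Icc.mp (hpart.2.1 B' hB' hd₀)
  have hlb : ∀ x : ℕ, 1 ≤ x → x ≤ 2 * n → 1 ≤ icyc n x := by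
    intro x h1 h2; unfold icyc; split <;> omega
  suffices h : B = B' by rw [h]
  have hb2 : b₀ ≠ 2 * n := by
    intro h
    rw [h, icyc_top] at hab
    have h1 := hlb a₀ hIa.1 hIa.2
    omega
  have hc2 : c₀ ≠ 2 * n := by
    intro h
    rw [h, icyc_top] at hbc
    have h1 := hlb b₀ hIb.1 hIb.2
    omega
  have hd2 : d₀ ≠ 2 * n := by
    intro h
    rw [h, icyc_top] at hcd
    have h1 := hlb c₀ hIc.1 hIc.2
    omega
  rw [icyc_of_ne hb2, icyc_of_ne hc2] at hbc
  rw [icyc_of_ne hc2, icyc_of_ne hd2] at hcd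
  rw [icyc_of_ne hb2] at hab
  by_cases ha2 : a₀ = 2 * n
  · have ha₀' : 2 * n ∈ B := ha2 ▸ ha₀
    exact (hnc B' hB' B hB b₀ hb₀ d₀ hd₀ c₀ hc₀ (2 * n) ha₀' (by omega) (by omega) (by omega)).symm
  · rw [icyc_of_ne ha2] at hab
    exact hnc B hB B' hB' a₀ ha₀ c₀ hc₀ b₀ hb₀ d₀ hd₀ (by omega) (by omega) (by omega)

lemma blockMin_eq_min' {B : Finset ℕ} (h : B.Nonempty) : blockMin B = B.min' h := by
  unfold blockMin
  rw [← Finset.coe_min' h, WithTop.untopD_coe]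

lemma blockMin_mem {B : Finset ℕ} (h : B.Nonempty) : blockMin B ∈ B := by
  rw [blockMin_eq_min' h]; exact Finset.min'_mem _ _

lemma blockMin_le {B : Finset ℕ} {x : ℕ} (hx : x ∈ B) : blockMin B ≤ x := by
  rw [blockMin_eq_min' ⟨x, hx⟩]; exact Finset.min'_le _ _ hx

lemma blockMin_image_not_one {n : ℕ} {B : Finset ℕ} (hB : B.Nonempty)
    (h1 : 1 ∉ B) : blockMin (B.image (cyc n)) = blockMin B - 1 := by
  have hBi : (B.image (cyc n)).Nonempty := hB.image _
  rw [blockMin_eq_min' hB, blockMin_eq_min' hBi]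
  apply le_antisymm
  · apply Finset.min'_le
    refine Finset.mem_image.mpr ⟨B.min' hB, Finset.min'_mem _ _, ?_⟩
    have h2 : B.min' hB ≠ 1 := fun h => h1 (h ▸ Finset.min'_mem _ _)
    exact cyc_of_ne h2
  · apply Finset.le_min'
    intro y hy
    obtain ⟨x, hx, rfl⟩ := Finset.mem_image.mp hy
    have hx1 : x ≠ 1 := fun h => h1 (h ▸ hx)
    rw [cyc_of_ne hx1]
    have := Finset.min'_le B x hx
    omega

lemma blockMin_image_one {n : ℕ} {B : Finset ℕ} (hsub : B ⊆ Finset.Icc 1 (2 * n))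
    (h1 : 1 ∈ B) (hE : (B.erase 1).Nonempty) :
    blockMin (B.image (cyc n)) = (B.erase 1).min' hE - 1 := by
  have hBi : (B.image (cyc n)).Nonempty := ⟨cyc n 1, Finset.mem_image_of_mem _ h1⟩
  rw [blockMin_eq_min' hBi]
  set s := (B.erase 1).min' hE with hs
  have hsB : s ∈ B := Finset.mem_of_mem_erase (Finset.min'_mem _ _)
  have hs1 : s ≠ 1 := Finset.ne_of_mem_erase (Finset.min'_mem _ _)
  have hsI := Finset.mem_Icc.mp (hsub hsB)
  apply le_antisymm
  · apply Finset.min'_le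
    refine Finset.mem_image.mpr ⟨s, hsB, ?_⟩
    exact cyc_of_ne hs1
  · apply Finset.le_min'
    intro y hy
    obtain ⟨x, hx, rfl⟩ := Finset.mem_image.mp hy
    by_cases hx1 : x = 1
    · subst hx1
      rw [cyc_one]
      omega
    · rw [cyc_of_ne hx1]
      have hxE : x ∈ B.erase 1 := Finset.mem_erase.mpr ⟨hx1, hx⟩
      have := Finset.min'_le _ x hxE
      omega

lemma blocks_eq_of_mem {N : ℕ} {π : Finset (Finset ℕ)} (hπ : IsPartitionOn N π)
    {B₁ B₂ : Finset ℕ} (h₁ : B₁ ∈ π) (h₂ : B₂ ∈ π) {i : ℕ} (hi1 : i ∈ B₁)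
    (hi2 : i ∈ B₂) : B₁ = B₂ := by
  obtain ⟨C, _, hu⟩ := hπ.2.2 i (hπ.2.1 B₁ h₁ hi1)
  exact (hu B₁ ⟨h₁, hi1⟩).trans (hu B₂ ⟨h₂, hi2⟩).symm

lemma secondMin_even {n : ℕ} (hn : 0 < n) {π : Finset (Finset ℕ)}
    (hne : IsNCEven (2 * n) π) {B : Finset ℕ} (hB : B ∈ π) (h1 : 1 ∈ B)
    (hE : (B.erase 1).Nonempty) : Even ((B.erase 1).min' hE) := by
  obtain ⟨hpart, hnc, hev⟩ := hne
  obtain ⟨hne1, hsub, huniq⟩ := hpart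
  set s := (B.erase 1).min' hE with hs
  have hsB : s ∈ B := Finset.mem_of_mem_erase (Finset.min'_mem _ _)
  have hs1 : s ≠ 1 := Finset.ne_of_mem_erase (Finset.min'_mem _ _)
  have hsI := Finset.mem_Icc.mp (hsub B hB hsB)
  have hs2 : 2 ≤ s := by omega
  set T : Finset ℕ := Finset.Icc 2 (s - 1) with hT
  have hpart' : IsPartitionOn (2 * n) π := ⟨hne1, hsub, huniq⟩
  have hblocks : ∀ B' ∈ π, ∀ x ∈ B', x ∈ T → B' ⊆ T := by
    intro B' hB' x hx hxT y hy
    have hxI : 2 ≤ x ∧ x ≤ s - 1 := Finset.mem_Icc.mp hxT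
    have hyI := Finset.mem_Icc.mp (hsub B' hB' hy)
    rw [hT, Finset.mem_Icc]
    by_contra hyT
    have hcases : y = 1 ∨ s ≤ y := by omega
    have hxB : B' = B → False := by
      intro hBB
      subst hBB
      have hxE : x ∈ B'.erase 1 := Finset.mem_erase.mpr ⟨by omega, hx⟩
      have := Finset.min'_le _ x hxE
      omega
    rcases hcases with h | h
    · subst h
      exact hxB (blocks_eq_of_mem hpart' hB' hB hy h1)
    · rcases eq_or_lt_of_le h with h' | h'
      · exact hxB (blocks_eq_of_mem hpart' hB' hB (h' ▸ hy) hsB)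
      · exact hxB (hnc B hB B' hB' 1 h1 s hsB x hx y hy (by omega) (by omega) h').symm
  classical
  set 𝒮 := π.filter (fun B' => B' ⊆ T) with h𝒮
  have hT_eq : T = 𝒮.biUnion id := by
    ext t
    simp only [h𝒮, Finset.mem_biUnion, Finset.mem_filter, id]
    constructor
    · intro ht
      have htT := Finset.mem_Icc.mp ht
      have htI : t ∈ Finset.Icc 1 (2 * n) := Finset.mem_Icc.mpr ⟨by omega, by omega⟩
      obtain ⟨B', ⟨hB', htB'⟩, _⟩ := huniq t htI
      exact ⟨B', ⟨hB', hblocks B' hB' t htB' ht⟩, htB'⟩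
    · rintro ⟨B', ⟨hB', hsubT⟩, htB'⟩
      exact hsubT htB'
  have hcard : T.card = ∑ B' ∈ 𝒮, B'.card := by
    rw [hT_eq]
    apply Finset.card_biUnion
    intro x hx y hy hxy
    simp only [h𝒮, Finset.mem_coe, Finset.mem_filter] at hx hy
    show Disjoint x y
    rw [Finset.disjoint_left]
    intro i hi hi2
    exact hxy (blocks_eq_of_mem hpart' hx.1 hy.1 hi hi2)
  have hTeven : Even T.card := by
    rw [hcard]
    apply Finset.even_sum
    intro B' hB'
    simp only [h𝒮, Finset.mem_filter] at hB'
    exact hev B' hB'.1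
  have hTcard : T.card = s - 2 := by
    rw [hT, Nat.card_Icc]
    omega
  rw [hTcard] at hTeven
  obtain ⟨r, hr⟩ := hTeven
  exact ⟨r + 1, by omega⟩

lemma erase_one_nonempty {B : Finset ℕ} (h1 : 1 ∈ B) (hev : Even B.card) :
    (B.erase 1).Nonempty := by
  rw [← Finset.card_pos, Finset.card_erase_of_mem h1]
  obtain ⟨r, hr⟩ := hev
  have : 0 < B.card := Finset.card_pos.mpr ⟨1, h1⟩
  omega

lemma count_key {n : ℕ} (hn : 0 < n) {π : Finset (Finset ℕ)}
    (hπ : IsNCEven (2 * n) π) : oddMinCount (Rmap n π) = evenMinCount π + 1 := by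
  classical
  obtain ⟨hpart, hnc, hev⟩ := hπ
  obtain ⟨hne, hsub, huniq⟩ := hpart
  have hpart' : IsPartitionOn (2 * n) π := ⟨hne, hsub, huniq⟩
  have hπ' : IsNCEven (2 * n) π := ⟨hpart', hnc, hev⟩
  unfold oddMinCount Rmap
  rw [Finset.filter_image, Finset.card_image_of_injOn]
  · obtain ⟨B₀, ⟨hB₀, h1B₀⟩, hu₀⟩ := huniq 1 (Finset.mem_Icc.mpr ⟨le_refl 1, by omega⟩)
    have hmin_one : ∀ B ∈ π, 1 ∈ B → blockMin B = 1 := by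
      intro B hB h1
      have h2 := blockMin_le h1
      have h3 := Finset.mem_Icc.mp (hsub B hB (blockMin_mem (hne B hB)))
      omega
    have hmin_ge : ∀ B ∈ π, 1 ∉ B → 2 ≤ blockMin B := by
      intro B hB h1
      have h2 := blockMin_mem (hne B hB)
      have h3 := Finset.mem_Icc.mp (hsub B hB h2)
      have : blockMin B ≠ 1 := fun h => h1 (h ▸ h2)
      omega
    have hkey : (π.filter fun B => ¬ Even (blockMin (B.image (cyc n)))) =
        insert B₀ (π.filter fun B => Even (blockMin B)) := by
      ext B
      simp only [Finset.mem_insert, Finset.mem_filter]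
      constructor
      · rintro ⟨hB, hQ⟩
        by_cases h1 : 1 ∈ B
        · left
          exact ((hu₀ B ⟨hB, h1⟩))
        · right
          refine ⟨hB, ?_⟩
          rw [blockMin_image_not_one (hne B hB) h1] at hQ
          have h2 := hmin_ge B hB h1
          rcases Nat.even_or_odd (blockMin B) with he | ho
          · exact he
          · exfalso
            obtain ⟨k, hk⟩ := ho
            exact hQ ⟨k, by omega⟩
      · rintro (h | ⟨hB, hP⟩)
        · subst h
          refine ⟨hB₀, ?_⟩
          have hE : (B.erase 1).Nonempty := erase_one_nonempty h1B₀ (hev B hB₀)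
          rw [blockMin_image_one (hsub B hB₀) h1B₀ hE]
          have hsEv := secondMin_even hn hπ' hB₀ h1B₀ hE
          set s := (B.erase 1).min' hE with hs
          have hsB : s ∈ B := Finset.mem_of_mem_erase (Finset.min'_mem _ _)
          have hs1 : s ≠ 1 := Finset.ne_of_mem_erase (Finset.min'_mem _ _)
          have hsI := Finset.mem_Icc.mp (hsub B hB₀ hsB)
          obtain ⟨k, hk⟩ := hsEv
          rintro ⟨j, hj⟩
          omega
        · refine ⟨hB, ?_⟩
          have h1 : 1 ∉ B := by
            intro h
            have := hmin_one B hB h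
            rw [this] at hP
            obtain ⟨k, hk⟩ := hP
            omega
          rw [blockMin_image_not_one (hne B hB) h1]
          have h2 := hmin_ge B hB h1
          obtain ⟨k, hk⟩ := hP
          rintro ⟨j, hj⟩
          omega
    rw [hkey, Finset.card_insert_of_notMem]
    · rfl
    · simp only [Finset.mem_filter, not_and]
      intro _
      rw [hmin_one B₀ hB₀ h1B₀]
      rintro ⟨k, hk⟩
      omega
  · intro B hB B' hB' h
    simp only [Finset.mem_coe, Finset.mem_filter] at hB hB'
    exact image_inj_of_sub (f := cyc n) (g := icyc n) (fun j hj => icyc_cyc hj)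
      (hsub B hB.1) (hsub B' hB'.1) h

lemma mapsTo_Rmap {n : ℕ} (hn : 0 < n) {π : Finset (Finset ℕ)}
    (hπ : IsNCEven (2 * n) π) : IsNCEven (2 * n) (Rmap n π) := by
  obtain ⟨hpart, hnc, hev⟩ := hπ
  refine ⟨?_, nc_Rmap hn hpart hnc, ?_⟩
  · exact IsPartitionOn.image_transport (fun j => cyc_mem hn) (fun j => icyc_mem hn)
      (fun j hj => icyc_cyc hj) (fun j hj => cyc_icyc hj) hpart
  · intro C hC
    obtain ⟨B, hB, rfl⟩ := Finset.mem_image.mp hC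
    rw [Finset.card_image_of_injOn]
    · exact hev B hB
    · intro x hx y hy h
      have hx' := hpart.2.1 B hB hx
      have hy' := hpart.2.1 B hB hy
      rw [← icyc_cyc hx', ← icyc_cyc hy', h]

lemma mapsTo_Smap {n : ℕ} (hn : 0 < n) {π : Finset (Finset ℕ)}
    (hπ : IsNCEven (2 * n) π) : IsNCEven (2 * n) (Smap n π) := by
  obtain ⟨hpart, hnc, hev⟩ := hπ
  refine ⟨?_, nc_Smap hn hpart hnc, ?_⟩
  · exact IsPartitionOn.image_transport (fun j => icyc_mem hn) (fun j => cyc_mem hn)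
      (fun j hj => cyc_icyc hj) (fun j hj => icyc_cyc hj) hpart
  · intro C hC
    obtain ⟨B, hB, rfl⟩ := Finset.mem_image.mp hC
    rw [Finset.card_image_of_injOn]
    · exact hev B hB
    · intro x hx y hy h
      have hx' := hpart.2.1 B hB hx
      have hy' := hpart.2.1 B hB hy
      rw [← cyc_icyc hx', ← cyc_icyc hy', h]

lemma Smap_Rmap {n : ℕ} {π : Finset (Finset ℕ)}
    (hsub : ∀ B ∈ π, B ⊆ Finset.Icc 1 (2 * n)) : Smap n (Rmap n π) = π := by
  unfold Smap Rmap
  rw [Finset.image_image]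
  have : Finset.image ((fun B => B.image (icyc n)) ∘ (fun B => B.image (cyc n))) π
      = Finset.image id π := by
    apply Finset.image_congr
    intro B hB
    exact image_image_cancel (fun j hj => icyc_cyc hj) (hsub B hB)
  rw [this, Finset.image_id]

lemma Rmap_Smap {n : ℕ} {π : Finset (Finset ℕ)}
    (hsub : ∀ B ∈ π, B ⊆ Finset.Icc 1 (2 * n)) : Rmap n (Smap n π) = π := by
  unfold Smap Rmap
  rw [Finset.image_image]
  have : Finset.image ((fun B => B.image (cyc n)) ∘ (fun B => B.image (icyc n))) π
      = Finset.image id π := by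
    apply Finset.image_congr
    intro B hB
    exact image_image_cancel (fun j hj => cyc_icyc hj) (hsub B hB)
  rw [this, Finset.image_id]

/-- `R` defines a permutation of `NC'(2n)`, and for every
`π ∈ NC'(2n)`, `o(R(π)) = e(π) + 1`. -/
theorem Rmap_bijOn_and_oddMin (n : ℕ) (hn : 0 < n) :
    Set.BijOn (Rmap n) {π | IsNCEven (2 * n) π} {π | IsNCEven (2 * n) π} ∧
      ∀ π, IsNCEven (2 * n) π → oddMinCount (Rmap n π) = evenMinCount π + 1 := by
  constructor
  · refine ⟨fun π hπ => mapsTo_Rmap hn hπ, ?_, ?_⟩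
    · intro π₁ h₁ π₂ h₂ h
      have e₁ := Smap_Rmap (n := n) (π := π₁) h₁.1.2.1
      have e₂ := Smap_Rmap (n := n) (π := π₂) h₂.1.2.1
      rw [← e₁, ← e₂, h]
    · intro π hπ
      refine ⟨Smap n π, mapsTo_Smap hn hπ, ?_⟩
      exact Rmap_Smap hπ.1.2.1
  · intro π hπ
    exact count_key hn hπ
end

section
/- For λ ∈ (0,1], the compositional inverse of the formal power series T(X) - 1 = (λX+1)(X+1) - 1 = λX² + (λ+1)X is U(X) = Σ_{n≥1} (-1)^{n-1} λ^{n-1} binom(2n,n) / (2(λ+1)^{2n-1}(2n-1)) · X^n. -/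
/-- Composition `f ∘ g` of formal power series (intended for `g` with zero
constant term, in which case this is the usual composition). -/
noncomputable def pscomp (f g : PowerSeries ℂ) : PowerSeries ℂ :=
  PowerSeries.mk fun n =>
    ∑ k ∈ Finset.range (n + 1), PowerSeries.coeff k f * PowerSeries.coeff n (g ^ k)

/-- The power series `U(X) = Σ_{n≥1} (-1)^{n-1} λ^{n-1} binom(2n,n)
/ (2(λ+1)^{2n-1}(2n-1)) · Xⁿ`. -/
noncomputable def Useries (l : ℝ) : PowerSeries ℂ :=
  PowerSeries.mk fun n =>
    if n = 0 then 0
    else ((-1 : ℂ)) ^ (n - 1) * (l : ℂ) ^ (n - 1) * (Nat.choose (2 * n) n : ℂ) /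
      (2 * ((l : ℂ) + 1) ^ (2 * n - 1) * (2 * n - 1 : ℕ))

open PowerSeries Finset

section PscompTheory

lemma coeff_pscomp (f g : PowerSeries ℂ) (n : ℕ) :
    coeff n (pscomp f g) = ∑ k ∈ range (n + 1), coeff k f * coeff n (g ^ k) := by
  simp [pscomp]

lemma coeff_pow_eq_zero {g : PowerSeries ℂ} (hg : constantCoeff g = 0)
    {k n : ℕ} (h : n < k) : coeff n (g ^ k) = 0 := by
  obtain ⟨u, rfl⟩ := PowerSeries.X_dvd_iff.2 hg
  rw [mul_pow, PowerSeries.coeff_X_pow_mul', if_neg (by omega)]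

lemma pscomp_X_right (f : PowerSeries ℂ) : pscomp f X = f := by
  ext n
  rw [coeff_pscomp]
  simp only [← X_pow_eq, PowerSeries.coeff_X_pow]
  rw [Finset.sum_congr rfl (fun k _ => by rw [mul_ite, mul_one, mul_zero])]
  rw [Finset.sum_ite_eq (range (n+1)) n (fun k => coeff k f)]
  simp

lemma pscomp_X_left {g : PowerSeries ℂ} (hg : constantCoeff g = 0) :
    pscomp X g = g := by
  ext n
  rw [coeff_pscomp]
  simp only [PowerSeries.coeff_X]
  rw [Finset.sum_congr rfl (fun k _ => by rw [ite_mul, one_mul, zero_mul])]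
  rw [Finset.sum_ite_eq' (range (n+1)) 1 (fun k => coeff n (g ^ k))]
  rcases n with _ | m
  · simp [hg]
  · simp [Finset.mem_range]

lemma pscomp_one_left (g : PowerSeries ℂ) : pscomp 1 g = 1 := by
  ext n
  rw [coeff_pscomp]
  simp only [PowerSeries.coeff_one]
  rw [Finset.sum_congr rfl (fun k _ => by rw [ite_mul, one_mul, zero_mul])]
  rw [Finset.sum_ite_eq' (range (n+1)) 0 (fun k => coeff n (g ^ k))]
  simp [PowerSeries.coeff_one]

lemma pscomp_add_left (f₁ f₂ g : PowerSeries ℂ) :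
    pscomp (f₁ + f₂) g = pscomp f₁ g + pscomp f₂ g := by
  ext n
  simp [coeff_pscomp, add_mul, Finset.sum_add_distrib]

lemma pscomp_sub_left (f₁ f₂ g : PowerSeries ℂ) :
    pscomp (f₁ - f₂) g = pscomp f₁ g - pscomp f₂ g := by
  ext n
  simp [coeff_pscomp, sub_mul, Finset.sum_sub_distrib]

lemma pscomp_smul_left (c : ℂ) (f g : PowerSeries ℂ) :
    pscomp (c • f) g = c • pscomp f g := by
  ext n
  simp [coeff_pscomp, Finset.mul_sum, mul_assoc]

lemma pscomp_mul {g : PowerSeries ℂ} (hg : constantCoeff g = 0) (f₁ f₂ : PowerSeries ℂ) :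
    pscomp (f₁ * f₂) g = pscomp f₁ g * pscomp f₂ g := by
  classical
  ext n
  rw [coeff_pscomp, PowerSeries.coeff_mul]
  set F : ℕ × ℕ → ℂ := fun p => coeff p.1 f₁ * coeff p.2 f₂ * coeff n (g ^ (p.1 + p.2))
    with hF
  have LHS : ∑ k ∈ range (n + 1), coeff k (f₁ * f₂) * coeff n (g ^ k)
      = ∑ p ∈ range (n + 1) ×ˢ range (n + 1), F p := by
    have step1 : ∑ k ∈ range (n + 1), coeff k (f₁ * f₂) * coeff n (g ^ k)
        = ∑ k ∈ range (n + 1), ∑ p ∈ antidiagonal k, F p := by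
      refine Finset.sum_congr rfl fun k _ => ?_
      rw [PowerSeries.coeff_mul, Finset.sum_mul]
      refine Finset.sum_congr rfl fun p hp => ?_
      rw [hF]; simp only []
      rw [Finset.HasAntidiagonal.mem_antidiagonal.1 hp]
    have hdisj : (↑(range (n + 1)) : Set ℕ).PairwiseDisjoint Finset.HasAntidiagonal.antidiagonal := by
      intro a _ b _ hab
      simp only [Finset.disjoint_left]
      intro p hpa hpb
      exact hab (by rw [← Finset.HasAntidiagonal.mem_antidiagonal.1 hpa, Finset.HasAntidiagonal.mem_antidiagonal.1 hpb])
    have hU : (range (n + 1)).biUnion Finset.HasAntidiagonal.antidiagonal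
        = (range (n + 1) ×ˢ range (n + 1)).filter (fun p => p.1 + p.2 ≤ n) := by
      ext p
      simp only [Finset.mem_biUnion, Finset.mem_range, Finset.HasAntidiagonal.mem_antidiagonal,
        Finset.mem_filter, Finset.mem_product]
      constructor
      · rintro ⟨k, hk, rfl⟩; omega
      · rintro ⟨⟨h1, h2⟩, h3⟩; exact ⟨p.1 + p.2, by omega, by simp⟩
    rw [step1, ← Finset.sum_biUnion hdisj, hU]
    refine Finset.sum_subset (Finset.filter_subset _ _) fun p hp hnp => ?_
    rw [hF]; simp only []
    rw [coeff_pow_eq_zero hg (k := p.1 + p.2) (by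
      simp only [Finset.mem_filter, hp, true_and] at hnp
      omega), mul_zero]
  rw [LHS, Finset.sum_product]
  rw [Finset.Nat.sum_antidiagonal_eq_sum_range_succ_mk]
  have hext : ∀ a ∈ range (n + 1),
      coeff a (pscomp f₁ g) * coeff (n - a) (pscomp f₂ g)
      = ∑ i ∈ range (n + 1), ∑ j ∈ range (n + 1),
          coeff i f₁ * coeff j f₂ * (coeff a (g ^ i) * coeff (n - a) (g ^ j)) := by
    intro a ha
    rw [Finset.mem_range] at ha
    rw [coeff_pscomp, coeff_pscomp]
    have e1 : ∑ i ∈ range (a + 1), coeff i f₁ * coeff a (g ^ i)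
        = ∑ i ∈ range (n + 1), coeff i f₁ * coeff a (g ^ i) := by
      refine Finset.sum_subset (Finset.range_subset_range.2 (by omega)) fun i hi hni => ?_
      rw [coeff_pow_eq_zero hg (by simp only [Finset.mem_range] at hni ⊢; omega), mul_zero]
    have e2 : ∑ j ∈ range (n - a + 1), coeff j f₂ * coeff (n - a) (g ^ j)
        = ∑ j ∈ range (n + 1), coeff j f₂ * coeff (n - a) (g ^ j) := by
      refine Finset.sum_subset (Finset.range_subset_range.2 (by omega)) fun j hj hnj => ?_
      rw [coeff_pow_eq_zero hg (by simp only [Finset.mem_range] at hnj ⊢; omega), mul_zero]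
    rw [e1, e2, Finset.sum_mul_sum]
    refine Finset.sum_congr rfl fun i _ => Finset.sum_congr rfl fun j _ => by ring
  rw [Finset.sum_congr rfl hext]
  conv_rhs => rw [Finset.sum_comm]
  refine Finset.sum_congr rfl fun i _ => ?_
  conv_rhs => rw [Finset.sum_comm]
  refine Finset.sum_congr rfl fun j _ => ?_
  rw [hF]; simp only []
  rw [← Finset.mul_sum, pow_add, PowerSeries.coeff_mul,
    Finset.Nat.sum_antidiagonal_eq_sum_range_succ_mk]

lemma pscomp_pow {g : PowerSeries ℂ} (hg : constantCoeff g = 0) (f : PowerSeries ℂ) (k : ℕ) :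
    pscomp (f ^ k) g = (pscomp f g) ^ k := by
  induction k with
  | zero => simpa using pscomp_one_left g
  | succ m ih => rw [pow_succ, pscomp_mul hg, ih, pow_succ]

lemma pscomp_assoc (f g h : PowerSeries ℂ) (hg : constantCoeff g = 0)
    (hh : constantCoeff h = 0) :
    pscomp (pscomp f g) h = pscomp f (pscomp g h) := by
  ext n
  rw [coeff_pscomp, coeff_pscomp]
  have e1 : ∀ m ∈ range (n + 1),
      coeff m (pscomp f g) * coeff n (h ^ m)
      = ∑ k ∈ range (n + 1), coeff k f * coeff m (g ^ k) * coeff n (h ^ m) := by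
    intro m hm
    rw [Finset.mem_range] at hm
    rw [coeff_pscomp, Finset.sum_mul]
    refine Finset.sum_subset (Finset.range_subset_range.2 (by omega)) fun k hk hnk => ?_
    rw [coeff_pow_eq_zero hg (by simp only [Finset.mem_range] at hnk ⊢; omega), mul_zero, zero_mul]
  have e2 : ∀ k ∈ range (n + 1),
      coeff k f * coeff n ((pscomp g h) ^ k)
      = ∑ m ∈ range (n + 1), coeff k f * (coeff m (g ^ k) * coeff n (h ^ m)) := by
    intro k _
    rw [← pscomp_pow hh, coeff_pscomp, Finset.mul_sum]
  rw [Finset.sum_congr rfl e1, Finset.sum_congr rfl e2, Finset.sum_comm]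
  exact Finset.sum_congr rfl fun k _ => Finset.sum_congr rfl fun m _ => by ring

lemma coeff_self_pow {g : PowerSeries ℂ} (hg : constantCoeff g = 0) (m : ℕ) :
    coeff m (g ^ m) = (coeff 1 g) ^ m := by
  induction m with
  | zero => simp
  | succ k ih =>
    rw [pow_succ, PowerSeries.coeff_mul, Finset.Nat.sum_antidiagonal_eq_sum_range_succ_mk]
    rw [Finset.sum_eq_single k]
    · rw [ih, Nat.add_sub_cancel_left, pow_succ]
    · intro b hb hbk
      rcases Nat.lt_or_ge b k with h | h
      · rw [coeff_pow_eq_zero hg h, zero_mul]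
      · have : b = k + 1 := by rw [Finset.mem_range] at hb; omega
        subst this
        simp [hg]
    · intro h
      exact absurd (Finset.mem_range.2 (by omega)) h

lemma pscomp_right_injective {g A : PowerSeries ℂ} (hg : constantCoeff g = 0)
    (h1 : coeff 1 g ≠ 0) (hA : pscomp A g = 0) : A = 0 := by
  ext m
  rw [map_zero]
  induction m using Nat.strong_induction_on with
  | _ m ih =>
    have h0 : coeff m (pscomp A g) = 0 := by rw [hA]; simp
    rw [coeff_pscomp] at h0
    rw [Finset.sum_eq_single m] at h0
    · rw [coeff_self_pow hg] at h0
      exact (mul_eq_zero.1 h0).resolve_right (pow_ne_zero m h1)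
    · intro k hk hkm
      rw [Finset.mem_range] at hk
      rcases Nat.lt_or_ge m k with h | h
      · omega
      · rw [ih k (by omega), zero_mul]
    · intro h
      exact absurd (Finset.mem_range.2 (by omega)) h

end PscompTheory

section UTheory

/-- The coefficients of `Useries`, written with Catalan numbers. -/
noncomputable def cU (l : ℝ) (n : ℕ) : ℂ :=
  if n = 0 then 0
  else (-1 : ℂ) ^ (n - 1) * (l : ℂ) ^ (n - 1) * (catalan (n - 1) : ℂ) / ((l : ℂ) + 1) ^ (2 * n - 1)

lemma choose_central_eq_catalan (m : ℕ) :
    (2 * (m + 1)).choose (m + 1) = 2 * (2 * m + 1) * catalan m := by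
  have h1 := Nat.succ_mul_centralBinom_succ m
  have h2 := succ_mul_catalan_eq_centralBinom m
  have h3 : (2 * (m + 1)).choose (m + 1) = Nat.centralBinom (m + 1) :=
    (Nat.centralBinom_eq_two_mul_choose (m + 1)).symm
  rw [h3]
  refine Nat.eq_of_mul_eq_mul_left (Nat.succ_pos m) ?_
  calc (m + 1) * (m + 1).centralBinom = 2 * (2 * m + 1) * m.centralBinom := h1
    _ = 2 * (2 * m + 1) * ((m + 1) * catalan m) := by rw [h2]
    _ = (m + 1) * (2 * (2 * m + 1) * catalan m) := by ring

lemma cU_succ (l : ℝ) (j : ℕ) :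
    cU l (j + 1) = (-1 : ℂ) ^ j * (l : ℂ) ^ j * (catalan j : ℂ) / ((l : ℂ) + 1) ^ (2 * j + 1) := by
  have e : 2 * (j + 1) - 1 = 2 * j + 1 := by omega
  simp only [cU, Nat.succ_ne_zero, if_false, Nat.add_sub_cancel, e]

lemma coeff_Useries (l : ℝ) (hl : ((l : ℂ) + 1) ≠ 0) (n : ℕ) :
    coeff n (Useries l) = cU l n := by
  rcases n with _ | m
  · simp [Useries, cU]
  · rw [Useries, PowerSeries.coeff_mk, if_neg (Nat.succ_ne_zero m), cU_succ]
    have e1 : 2 * (m + 1) - 1 = 2 * m + 1 := by omega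
    rw [Nat.add_sub_cancel, e1, choose_central_eq_catalan]
    have h3 : ((l : ℂ) + 1) ^ (2 * m + 1) ≠ 0 := pow_ne_zero _ hl
    have h2 : ((2 * m + 1 : ℕ) : ℂ) ≠ 0 := Nat.cast_ne_zero.2 (by omega)
    push_cast at h2 ⊢
    rw [div_eq_div_iff (mul_ne_zero (mul_ne_zero two_ne_zero h3) h2) h3]
    ring

lemma cU_key (l : ℝ) (hl : ((l : ℂ) + 1) ≠ 0) (n : ℕ) :
    (l : ℂ) * (∑ p ∈ antidiagonal n, cU l p.1 * cU l p.2) + ((l : ℂ) + 1) * cU l n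
      = if n = 1 then 1 else 0 := by
  rcases n with _ | _ | m
  · simp [cU]
  · rw [if_pos rfl]
    have : ∑ p ∈ antidiagonal 1, cU l p.1 * cU l p.2 = 0 := by
      rw [Finset.Nat.sum_antidiagonal_eq_sum_range_succ_mk, Finset.sum_range_succ,
        Finset.sum_range_one]
      simp [cU]
    rw [this, mul_zero, zero_add, cU_succ]
    simp only [pow_zero, one_mul, catalan_zero, Nat.cast_one, mul_one, pow_one]
    field_simp
    ring
  · rw [if_neg (by omega)]
    have hsum : ∑ p ∈ antidiagonal (m + 2), cU l p.1 * cU l p.2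
        = (-1 : ℂ) ^ m * (l : ℂ) ^ m * (catalan (m + 1) : ℂ) / ((l : ℂ) + 1) ^ (2 * m + 2) := by
      rw [Finset.Nat.sum_antidiagonal_eq_sum_range_succ_mk]
      rw [Finset.sum_range_succ', Finset.sum_range_succ]
      have hz0 : cU l 0 = 0 := by simp [cU]
      have hlast : cU l (m + 1 + 1) * cU l (m + 2 - (m + 1 + 1)) = 0 := by
        rw [Nat.sub_self, hz0, mul_zero]
      rw [hlast, hz0, zero_mul, add_zero, add_zero]
      have hterm : ∀ i ∈ range (m + 1),
          cU l (i + 1) * cU l (m + 2 - (i + 1))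
          = (-1 : ℂ) ^ m * (l : ℂ) ^ m / ((l : ℂ) + 1) ^ (2 * m + 2)
              * ((catalan i : ℂ) * (catalan (m - i) : ℂ)) := by
        intro i hi
        rw [Finset.mem_range] at hi
        have e : m + 2 - (i + 1) = (m - i) + 1 := by omega
        rw [e, cU_succ, cU_succ, div_mul_div_comm]
        have e2 : (-1 : ℂ) ^ i * (l:ℂ) ^ i * (catalan i : ℂ) *
            ((-1:ℂ) ^ (m - i) * (l:ℂ) ^ (m - i) * (catalan (m - i) : ℂ))
            = ((-1:ℂ) ^ i * (-1:ℂ) ^ (m-i)) * ((l:ℂ) ^ i * (l:ℂ) ^ (m-i)) *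
              ((catalan i : ℂ) * (catalan (m - i) : ℂ)) := by ring
        have e3 : (((l:ℂ)+1) ^ (2*i+1)) * (((l:ℂ)+1) ^ (2*(m-i)+1)) = ((l:ℂ)+1) ^ (2*m+2) := by
          rw [← pow_add]; congr 1; omega
        have e4 : (-1:ℂ) ^ i * (-1:ℂ) ^ (m-i) = (-1:ℂ) ^ m := by
          rw [← pow_add]; congr 1; omega
        have e5 : (l:ℂ) ^ i * (l:ℂ) ^ (m-i) = (l:ℂ) ^ m := by
          rw [← pow_add]; congr 1; omega
        rw [e2, e3, e4, e5]; ring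
      rw [Finset.sum_congr rfl hterm, ← Finset.mul_sum]
      have hcat : ∑ i ∈ range (m + 1), (catalan i : ℂ) * (catalan (m - i) : ℂ)
          = (catalan (m + 1) : ℂ) := by
        rw [catalan_succ']
        rw [Finset.Nat.sum_antidiagonal_eq_sum_range_succ_mk]
        push_cast
        rfl
      rw [hcat]; ring
    rw [hsum]
    have e6 : cU l (m + 2) = (-1:ℂ)^(m+1) * (l:ℂ)^(m+1) * (catalan (m+1) : ℂ) /
        ((l:ℂ)+1)^(2*m+3) := by
      have e : 2 * (m + 1) + 1 = 2 * m + 3 := by omega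
      rw [cU_succ, e]
    rw [e6]
    have h3 : ((l : ℂ) + 1) ^ (2 * m + 2) ≠ 0 := pow_ne_zero _ hl
    have h4 : ((l : ℂ) + 1) ^ (2 * m + 3) ≠ 0 := pow_ne_zero _ hl
    field_simp
    ring

end UTheory

/-- for `λ ∈ (0,1]`, `U` is the compositional inverse of
`T(X) - 1 = λX² + (λ+1)X`, i.e. `U ∘ (T-1) = X` and `(T-1) ∘ U = X`. -/
theorem Useries_is_comp_inverse (l : ℝ) (hl : l ∈ Set.Ioc (0 : ℝ) 1) :
    let S : PowerSeries ℂ :=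
      (l : ℂ) • PowerSeries.X ^ 2 + ((l : ℂ) + 1) • PowerSeries.X
    pscomp (Useries l) S = PowerSeries.X ∧ pscomp S (Useries l) = PowerSeries.X := by
  intro S
  obtain ⟨hl0, hl1⟩ := hl
  have hlC : ((l : ℂ) + 1) ≠ 0 := by
    have : ((l + 1 : ℝ) : ℂ) ≠ 0 := Complex.ofReal_ne_zero.2 (by linarith)
    push_cast at this
    exact this
  set U : PowerSeries ℂ := Useries l with hUdef
  have hU0 : constantCoeff U = 0 := by
    rw [← PowerSeries.coeff_zero_eq_constantCoeff, hUdef, coeff_Useries l hlC, cU]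
    simp
  have hS0 : constantCoeff S = 0 := by
    simp only [S, map_add, map_smul, map_pow, PowerSeries.constantCoeff_X]
    simp [PowerSeries.smul_eq_C_mul]
  -- second direction: S ∘ U = X
  have hB : pscomp S U = PowerSeries.X := by
    have hstep : pscomp S U = (l : ℂ) • (U * U) + ((l : ℂ) + 1) • U := by
      have : S = (l : ℂ) • (PowerSeries.X * PowerSeries.X) + ((l : ℂ) + 1) • PowerSeries.X := by
        rw [← pow_two]
      rw [this, pscomp_add_left, pscomp_smul_left, pscomp_smul_left,
        pscomp_mul hU0, pscomp_X_left hU0]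
    rw [hstep]
    ext n
    simp only [map_add, map_smul, smul_eq_mul]
    rw [PowerSeries.coeff_mul]
    have hco : ∀ p ∈ antidiagonal n, coeff p.1 U * coeff p.2 U = cU l p.1 * cU l p.2 := by
      intro p _
      rw [hUdef, coeff_Useries l hlC, coeff_Useries l hlC]
    rw [Finset.sum_congr rfl hco, hUdef, coeff_Useries l hlC, cU_key l hlC n,
      PowerSeries.coeff_X]
  -- first direction, via associativity and injectivity
  have hU1 : coeff 1 U ≠ 0 := by
    rw [hUdef, coeff_Useries l hlC, show (1 : ℕ) = 0 + 1 from rfl, cU_succ]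
    simp only [pow_zero, one_mul, catalan_zero, Nat.cast_one, mul_one, pow_one]
    exact div_ne_zero one_ne_zero (pow_ne_zero _ hlC)
  have hA : pscomp U S = PowerSeries.X := by
    have hassoc : pscomp (pscomp U S) U = pscomp U (pscomp S U) :=
      pscomp_assoc U S U hS0 hU0
    rw [hB, pscomp_X_right] at hassoc
    have hXU : pscomp PowerSeries.X U = U := pscomp_X_left hU0
    have hzero : pscomp (pscomp U S - PowerSeries.X) U = 0 := by
      rw [pscomp_sub_left, hassoc, hXU, sub_self]
    have := pscomp_right_injective hU0 hU1 hzero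
    exact sub_eq_zero.1 this
  exact ⟨hA, hB⟩
end

section
/- For λ ∈ (0,1), set κ = 2(λ(2-λ))^{1/2}. Then κ ∈ (0,2), and the function f(x) = (κ² - (x²-2)²)^{1/2} / (πλ|x|(4-x²)), defined on the set O = (-(2+κ)^{1/2}, -(2-κ)^{1/2}) ∪ ((2-κ)^{1/2}, (2+κ)^{1/2}) and 0 elsewhere, is a probability density: ∫_O f(x) dx = 1. -/
open MeasureTheory

set_option maxHeartbeats 1000000

open Real in
lemma hasDerivAt_H (κ c : ℝ) (hκ : 0 < κ) (hc : 0 < c) (hcκ : c^2 + κ^2 = 4)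
    (x : ℝ) (hx : (x^2-2)^2 < κ^2) (hx0 : 0 < x) :
    HasDerivAt (fun y => Real.arcsin ((y^2-2)/κ)/2
        - c/4 * Real.arcsin (c*(y^2-2)/(κ * Real.sqrt (4-(y^2-2)^2))))
      (Real.sqrt (κ^2 - (x^2-2)^2)/(x*(4-x^2))) x := by
  have h2 : κ < 2 := by nlinarith
  have hS0 : 0 < κ^2 - (x^2-2)^2 := by nlinarith
  have hW0 : 0 < 4 - (x^2-2)^2 := by nlinarith
  set S := Real.sqrt (κ^2-(x^2-2)^2) with hSdef
  set W := Real.sqrt (4-(x^2-2)^2) with hWdef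
  have hSsq : S^2 = κ^2-(x^2-2)^2 := Real.sq_sqrt hS0.le
  have hWsq : W^2 = 4-(x^2-2)^2 := Real.sq_sqrt hW0.le
  have hSpos : 0 < S := Real.sqrt_pos.mpr hS0
  have hWpos : 0 < W := Real.sqrt_pos.mpr hW0
  have h4x : 0 < 4 - x^2 := by nlinarith
  have d_inner : HasDerivAt (fun y : ℝ => y^2-2) (2*x) x := by
    simpa using (hasDerivAt_pow 2 x).sub_const 2
  -- bounds for arcsin arguments
  have hb1 : x^2-2 < κ := by nlinarith
  have hb2 : -κ < x^2-2 := by nlinarith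
  have hne1 : (x^2-2)/κ ≠ -1 := by
    have : -1 < (x^2-2)/κ := by rw [neg_lt, ← neg_div]; exact (div_lt_one hκ).mpr (by linarith)
    exact this.ne'
  have hne2 : (x^2-2)/κ ≠ 1 := ((div_lt_one hκ).mpr hb1).ne
  have hu1 : HasDerivAt (fun y : ℝ => (y^2-2)/κ) (2*x/κ) x := d_inner.div_const κ
  have hA1 : HasDerivAt (fun y => Real.arcsin ((y^2-2)/κ))
      (1/Real.sqrt (1-((x^2-2)/κ)^2) * (2*x/κ)) x :=
    by have := (Real.hasDerivAt_arcsin hne1 hne2).comp x hu1; exact this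
  -- second part
  have hv : HasDerivAt (fun y : ℝ => 4-(y^2-2)^2) (-(2*(x^2-2)^1*(2*x))) x :=
    (d_inner.pow 2).const_sub 4
  have hw : HasDerivAt (fun y : ℝ => Real.sqrt (4-(y^2-2)^2))
      (-(2*(x^2-2)^1*(2*x))/(2*W)) x := hv.sqrt hW0.ne'
  have hn : HasDerivAt (fun y : ℝ => c*(y^2-2)) (c*(2*x)) x := d_inner.const_mul c
  have hd : HasDerivAt (fun y : ℝ => κ * Real.sqrt (4-(y^2-2)^2))
      (κ * (-(2*(x^2-2)^1*(2*x))/(2*W))) x := hw.const_mul κ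
  have hden_ne : κ * W ≠ 0 := by positivity
  have hu2 : HasDerivAt (fun y : ℝ => c*(y^2-2)/(κ * Real.sqrt (4-(y^2-2)^2)))
      ((c*(2*x)*(κ*W) - c*(x^2-2)*(κ * (-(2*(x^2-2)^1*(2*x))/(2*W))))/(κ*W)^2) x :=
    hn.div hd hden_ne
  have hsqlt : (c*(x^2-2)/(κ*W))^2 < 1 := by
    rw [div_pow, div_lt_one (by positivity)]
    nlinarith [hWsq, hS0]
  have habs := abs_lt.mp ((sq_lt_one_iff_abs_lt_one (a := c*(x^2-2)/(κ*W))).mp hsqlt)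
  have hA2 : HasDerivAt (fun y => Real.arcsin (c*(y^2-2)/(κ * Real.sqrt (4-(y^2-2)^2))))
      (1/Real.sqrt (1-(c*(x^2-2)/(κ*W))^2) *
        ((c*(2*x)*(κ*W) - c*(x^2-2)*(κ * (-(2*(x^2-2)^1*(2*x))/(2*W))))/(κ*W)^2)) x :=
    by have := (Real.hasDerivAt_arcsin habs.1.ne' habs.2.ne).comp x hu2; exact this
  have eq1 : Real.sqrt (1-((x^2-2)/κ)^2) = S/κ := by
    rw [show (1:ℝ)-((x^2-2)/κ)^2 = (κ^2-(x^2-2)^2)/κ^2 by field_simp,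
      Real.sqrt_div hS0.le, Real.sqrt_sq hκ.le]
  have eq2 : Real.sqrt (1-(c*(x^2-2)/(κ*W))^2) = 2*S/(κ*W) := by
    rw [show (1:ℝ)-(c*(x^2-2)/(κ*W))^2 = (2*S/(κ*W))^2 by
      field_simp
      nlinarith [hSsq, hWsq]]
    exact Real.sqrt_sq (by positivity)
  have : HasDerivAt (fun y => Real.arcsin ((y^2-2)/κ)/2
      - c/4 * Real.arcsin (c*(y^2-2)/(κ * Real.sqrt (4-(y^2-2)^2)))) _ x :=
    (hA1.div_const 2).sub (hA2.const_mul (c/4))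
  convert this using 1
  rw [eq1, eq2, one_div_div, one_div_div]
  field_simp
  ring_nf
  linear_combination 4*W^2*hSsq + 4*W^2*hcκ + c^2*(4*x^2-x^4-4)*hWsq

open Real in
lemma core_integral (κ c : ℝ) (hκ : 0 < κ) (hc : 0 < c) (hcκ : c^2 + κ^2 = 4) :
    ∫ x in Real.sqrt (2-κ)..Real.sqrt (2+κ),
      Real.sqrt (κ^2 - (x^2-2)^2) / (x*(4-x^2)) = Real.pi/2 - c*Real.pi/4 := by
  have h2 : κ < 2 := by nlinarith
  set a := Real.sqrt (2-κ) with ha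
  set b := Real.sqrt (2+κ) with hb
  have h2κ : (0:ℝ) < 2-κ := by linarith
  have h2κ' : (0:ℝ) < 2+κ := by linarith
  have ha2 : a^2 = 2-κ := Real.sq_sqrt h2κ.le
  have hb2 : b^2 = 2+κ := Real.sq_sqrt h2κ'.le
  have hapos : 0 < a := Real.sqrt_pos.mpr h2κ
  have hbpos : 0 < b := Real.sqrt_pos.mpr h2κ'
  have hab : a < b := by
    rw [ha, hb]; exact Real.sqrt_lt_sqrt h2κ.le (by linarith)
  have hblt : b < 2 := by nlinarith
  set H : ℝ → ℝ := fun y => Real.arcsin ((y^2-2)/κ)/2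
      - c/4 * Real.arcsin (c*(y^2-2)/(κ * Real.sqrt (4-(y^2-2)^2))) with hH
  -- key facts on Icc a b
  have hsq_mem : ∀ x ∈ Set.Icc a b, (x^2-2)^2 ≤ κ^2 ∧ 0 < x ∧ x < 2 := by
    intro x hx
    obtain ⟨h1, h2'⟩ := hx
    have hx0 : 0 < x := lt_of_lt_of_le hapos h1
    have hxa : a^2 ≤ x^2 := by nlinarith
    have hxb : x^2 ≤ b^2 := by nlinarith
    refine ⟨by nlinarith, hx0, by nlinarith⟩
  have hcont : ContinuousOn H (Set.Icc a b) := by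
    apply ContinuousOn.sub
    · exact (Real.continuous_arcsin.comp (by continuity)).continuousOn.div_const 2
    · apply continuousOn_const.mul
      apply Real.continuous_arcsin.comp_continuousOn
      apply ContinuousOn.div (by fun_prop)
      · fun_prop
      · intro x hx
        obtain ⟨hs, hx0, hx2⟩ := hsq_mem x hx
        have : 0 < 4 - (x^2-2)^2 := by nlinarith
        positivity
  have hderiv : ∀ x ∈ Set.Ioo a b,
      HasDerivWithinAt H (Real.sqrt (κ^2 - (x^2-2)^2)/(x*(4-x^2))) (Set.Ioi x) x := by
    intro x hx
    have hx0 : 0 < x := lt_trans hapos hx.1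
    have hxa : a^2 < x^2 := by nlinarith [hx.1]
    have hxb : x^2 < b^2 := by nlinarith [hx.2]
    exact (hasDerivAt_H κ c hκ hc hcκ x (by nlinarith) hx0).hasDerivWithinAt
  have hint : IntervalIntegrable (fun x => Real.sqrt (κ^2 - (x^2-2)^2)/(x*(4-x^2)))
      MeasureTheory.volume a b := by
    apply ContinuousOn.intervalIntegrable
    rw [Set.uIcc_of_le hab.le]
    apply ContinuousOn.div (by fun_prop) (by fun_prop)
    intro x hx
    obtain ⟨hs, hx0, hx2⟩ := hsq_mem x hx
    have h4 : 0 < 4 - x^2 := by nlinarith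
    positivity
  rw [intervalIntegral.integral_eq_sub_of_hasDeriv_right_of_le hab.le hcont hderiv hint]
  have hWb : Real.sqrt (4-(b^2-2)^2) = c := by
    rw [hb2, show (4:ℝ)-(2+κ-2)^2 = c^2 by linarith, Real.sqrt_sq hc.le]
  have hWa : Real.sqrt (4-(a^2-2)^2) = c := by
    rw [ha2, show (4:ℝ)-(2-κ-2)^2 = c^2 by linarith, Real.sqrt_sq hc.le]
  rw [hH]
  have hWκ : Real.sqrt (4-κ^2) = c := by
    rw [show (4:ℝ)-κ^2 = c^2 by linarith, Real.sqrt_sq hc.le]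
  simp only [hb2, ha2, show (2:ℝ)+κ-2 = κ by ring, show (2:ℝ)-κ-2 = -κ by ring, neg_sq, hWκ]
  rw [div_self hκ.ne', show c*-κ/(κ*c) = -1 by field_simp,
    show c*κ/(κ*c) = 1 by field_simp, show -κ/κ = (-1:ℝ) by field_simp]
  rw [Real.arcsin_one, Real.arcsin_neg_one]
  ring


/-- for `λ ∈ (0,1)` and `κ = 2√(λ(2-λ))`, we have `κ ∈ (0,2)` and
`x ↦ √(κ²-(x²-2)²)/(πλ|x|(4-x²))`, supported on
`O = (-(2+κ)^{1/2}, -(2-κ)^{1/2}) ∪ ((2-κ)^{1/2}, (2+κ)^{1/2})`, is a probability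
density. -/
theorem bernoulli_density_integral (l : ℝ) (hl0 : 0 < l) (hl1 : l < 1) :
    let κ : ℝ := 2 * Real.sqrt (l * (2 - l))
    let O : Set ℝ :=
      Set.Ioo (-(Real.sqrt (2 + κ))) (-(Real.sqrt (2 - κ))) ∪
        Set.Ioo (Real.sqrt (2 - κ)) (Real.sqrt (2 + κ))
    (0 < κ ∧ κ < 2) ∧
      ∫ x : ℝ, O.indicator
        (fun x => Real.sqrt (κ ^ 2 - (x ^ 2 - 2) ^ 2) /
          (Real.pi * l * |x| * (4 - x ^ 2))) x = 1 := by
  intro κ O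
  have hll : 0 < l * (2 - l) := by nlinarith
  have hκ2 : κ^2 = 4*(l*(2-l)) := by
    show (2 * Real.sqrt (l * (2 - l)))^2 = _
    rw [mul_pow, Real.sq_sqrt hll.le]; ring
  have hκpos : 0 < κ := mul_pos two_pos (Real.sqrt_pos.mpr hll)
  have h1l : (0:ℝ) < 1 - l := by linarith
  have hκlt : κ < 2 := by nlinarith [pow_pos h1l 2]
  refine ⟨⟨hκpos, hκlt⟩, ?_⟩
  set c : ℝ := 2*(1-l) with hcdef
  have hc : 0 < c := by positivity
  have hcκ : c^2 + κ^2 = 4 := by rw [hcdef, hκ2]; ring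
  set a := Real.sqrt (2-κ) with hadef
  set b := Real.sqrt (2+κ) with hbdef
  have h2κ : (0:ℝ) < 2-κ := by linarith
  have h2κ' : (0:ℝ) < 2+κ := by linarith
  have ha2 : a^2 = 2-κ := Real.sq_sqrt h2κ.le
  have hb2 : b^2 = 2+κ := Real.sq_sqrt h2κ'.le
  have hapos : 0 < a := Real.sqrt_pos.mpr h2κ
  have hbpos : 0 < b := Real.sqrt_pos.mpr h2κ'
  have hab : a < b := Real.sqrt_lt_sqrt h2κ.le (by linarith)
  have hblt : b < 2 := by nlinarith
  set f : ℝ → ℝ := fun x => Real.sqrt (κ ^ 2 - (x ^ 2 - 2) ^ 2) /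
      (Real.pi * l * |x| * (4 - x ^ 2)) with hf
  have hO : MeasurableSet O := MeasurableSet.union measurableSet_Ioo measurableSet_Ioo
  rw [integral_indicator hO]
  -- continuity of f on the two closed intervals
  have hden : ∀ x : ℝ, x ∈ Set.Icc a b ∪ Set.Icc (-b) (-a) →
      Real.pi * l * |x| * (4 - x ^ 2) ≠ 0 := by
    intro x hx
    have h1 : a ≤ |x| ∧ |x| ≤ b := by
      rcases hx with hx | hx
      · rw [abs_of_pos (lt_of_lt_of_le hapos hx.1)]; exact hx
      · rw [abs_of_neg (by nlinarith [hx.2] : x < 0)]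
        exact ⟨by linarith [hx.2], by linarith [hx.1]⟩
    have h2 : x^2 ≤ b^2 := by
      have := sq_abs x; nlinarith [h1.2, abs_nonneg x]
    have h3 : 0 < 4 - x^2 := by nlinarith
    have h4 : 0 < |x| := lt_of_lt_of_le hapos h1.1
    positivity
  have hcont1 : ContinuousOn f (Set.Icc a b) := by
    apply ContinuousOn.div (by fun_prop) (by fun_prop)
    intro x hx; exact hden x (Or.inl hx)
  have hcont2 : ContinuousOn f (Set.Icc (-b) (-a)) := by
    apply ContinuousOn.div (by fun_prop) (by fun_prop)
    intro x hx; exact hden x (Or.inr hx)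
  have hi1 : IntegrableOn f (Set.Ioo a b) :=
    hcont1.integrableOn_Icc.mono_set Set.Ioo_subset_Icc_self
  have hi2 : IntegrableOn f (Set.Ioo (-b) (-a)) :=
    hcont2.integrableOn_Icc.mono_set Set.Ioo_subset_Icc_self
  have hdisj : Disjoint (Set.Ioo (-b) (-a)) (Set.Ioo a b) := by
    rw [Set.disjoint_left]
    intro x hx1 hx2
    have := hx1.2; have := hx2.1
    simp only [Set.mem_Ioo] at *
    linarith [hx1.2, hx2.1]
  rw [show O = Set.Ioo (-b) (-a) ∪ Set.Ioo a b from rfl]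
  rw [setIntegral_union hdisj measurableSet_Ioo hi2 hi1]
  have key1 : ∫ x in Set.Ioo a b, f x = ∫ x in a..b, f x := by
    rw [intervalIntegral.integral_of_le hab.le, integral_Ioc_eq_integral_Ioo]
  have key2 : ∫ x in Set.Ioo (-b) (-a), f x = ∫ x in a..b, f x := by
    rw [← integral_Ioc_eq_integral_Ioo,
      ← intervalIntegral.integral_of_le (by linarith : -b ≤ -a),
      ← intervalIntegral.integral_comp_neg f]
    apply intervalIntegral.integral_congr
    intro x _
    show f (-x) = f x
    rw [hf]
    simp only [abs_neg, neg_sq]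
  have hval : ∫ x in a..b, f x = (Real.pi*l)⁻¹ * (Real.pi/2 - c*Real.pi/4) := by
    rw [show (∫ x in a..b, f x) =
        ∫ x in a..b, (Real.pi*l)⁻¹ * (Real.sqrt (κ^2 - (x^2-2)^2) / (x*(4-x^2))) from ?_,
      intervalIntegral.integral_const_mul, core_integral κ c hκpos hc hcκ]
    apply intervalIntegral.integral_congr
    intro x hx
    rw [Set.uIcc_of_le hab.le] at hx
    have hx0 : 0 < x := lt_of_lt_of_le hapos hx.1
    rw [hf]
    show Real.sqrt (κ ^ 2 - (x ^ 2 - 2) ^ 2) / (Real.pi * l * |x| * (4 - x ^ 2)) = _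
    rw [abs_of_pos hx0]
    show Real.sqrt (κ ^ 2 - (x ^ 2 - 2) ^ 2) / (Real.pi * l * x * (4 - x ^ 2)) =
      (Real.pi*l)⁻¹ * (Real.sqrt (κ^2 - (x^2-2)^2) / (x*(4-x^2)))
    have hx4 : (4:ℝ) - x^2 ≠ 0 := by nlinarith [hx.2]
    have hxne : x ≠ 0 := hx0.ne'
    have hlne : l ≠ 0 := hl0.ne'
    have hπ : Real.pi ≠ 0 := Real.pi_ne_zero
    field_simp
  rw [key1, key2, hval, hcdef]
  have hπ : Real.pi ≠ 0 := Real.pi_ne_zero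
  field_simp
  ring
end

section
/- Let (μ_n) be a sequence of symmetric probability measures on ℝ converging weakly to a symmetric probability measure μ. Then the Cauchy transforms G_{μ_n} converge to G_μ uniformly on the set {z ∈ ℂ : Im z ≥ 1}, and consequently sup_{Im z ≥ 1} |G_{μ_n}(z) - G_μ(z)| → 0 defines a metric compatible with weak convergence on the set of probability measures on ℝ. -/
open MeasureTheory Complex Filter

/-- A probability measure on `ℝ` is symmetric if it is invariant under `x ↦ -x`. -/
def IsSymmetricMeasure (μ : Measure ℝ) : Prop := μ.map (fun x => -x) = μ

/-- The Cauchy transform `G_μ(z) = ∫ dμ(t)/(z-t)`. -/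
noncomputable def cauchyT (μ : Measure ℝ) (z : ℂ) : ℂ := ∫ t, (z - (t : ℂ))⁻¹ ∂μ

/-- The branch of the square root on `ℂ∖[0,∞)` mapping into the upper half plane:
`√z = i·(-z)^{1/2}` with the principal power. -/
noncomputable def sqrtCut (z : ℂ) : ℂ := Complex.I * (-z) ^ (1 / 2 : ℂ)

/-- The rectangular Cauchy transform with ratio `λ`:
`H_μ(z) = λ G_μ(1/√z)² + (1-λ)√z G_μ(1/√z)` for `z ∈ ℂ∖[0,∞)`. -/
noncomputable def rectH (l : ℝ) (μ : Measure ℝ) (z : ℂ) : ℂ :=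
  (l : ℂ) * (cauchyT μ (sqrtCut z)⁻¹) ^ 2 +
    (1 - (l : ℂ)) * sqrtCut z * cauchyT μ (sqrtCut z)⁻¹

/-- Tightness of a family of measures on `ℝ`. -/
def TightFamily (A : Set (Measure ℝ)) : Prop :=
  ∀ ε : ℝ, 0 < ε → ∃ M : ℝ, ∀ μ ∈ A, μ (Set.Icc (-M) M)ᶜ < ENNReal.ofReal ε

lemma sub_ofReal_ne_zero {z : ℂ} (hz : 1 ≤ z.im) (t : ℝ) : z - (t : ℂ) ≠ 0 := by
  intro h
  have h2 : (z - (t : ℂ)).im = 0 := by rw [h]; simp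
  simp [Complex.sub_im] at h2
  linarith

lemma one_le_abs_sub {z : ℂ} (hz : 1 ≤ z.im) (t : ℝ) : 1 ≤ ‖z - t‖ := by
  have h1 := Complex.abs_im_le_norm (z - (t : ℂ))
  have h2 : (z - (t : ℂ)).im = z.im := by simp [Complex.sub_im]
  rw [h2] at h1
  calc (1:ℝ) ≤ z.im := hz
    _ ≤ |z.im| := le_abs_self _
    _ ≤ _ := h1

lemma norm_inv_le_one {z : ℂ} (hz : 1 ≤ z.im) (t : ℝ) : ‖(z - (t : ℂ))⁻¹‖ ≤ 1 := by
  rw [norm_inv]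
  have := one_le_abs_sub hz t
  exact inv_le_one_of_one_le₀ this

lemma norm_inv_le_im {z : ℂ} (hz : 1 ≤ z.im) (t : ℝ) : ‖(z - (t : ℂ))⁻¹‖ ≤ (z.im)⁻¹ := by
  rw [norm_inv]
  have h1 := Complex.abs_im_le_norm (z - (t : ℂ))
  have h2 : (z - (t : ℂ)).im = z.im := by simp [Complex.sub_im]
  rw [h2] at h1
  have hzim : (0:ℝ) < z.im := by linarith
  exact inv_anti₀ hzim ((le_abs_self _).trans h1)

lemma cont_inv (z : ℂ) (hz : 1 ≤ z.im) : Continuous (fun t : ℝ => (z - (t : ℂ))⁻¹) :=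
  Continuous.inv₀ (by continuity) (fun t => sub_ofReal_ne_zero hz t)

lemma integrable_inv (ν : Measure ℝ) [IsProbabilityMeasure ν] {z : ℂ} (hz : 1 ≤ z.im) :
    Integrable (fun t : ℝ => (z - (t : ℂ))⁻¹) ν :=
  ⟨(cont_inv z hz).aestronglyMeasurable,
    HasFiniteIntegral.of_bounded (C := 1) (Filter.Eventually.of_forall fun t => norm_inv_le_one hz t)⟩



lemma cauchyT_lip (ν : Measure ℝ) [IsProbabilityMeasure ν] {z w : ℂ}
    (hz : 1 ≤ z.im) (hw : 1 ≤ w.im) :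
    ‖cauchyT ν z - cauchyT ν w‖ ≤ ‖z - w‖ := by
  rw [cauchyT, cauchyT, ← integral_sub (integrable_inv ν hz) (integrable_inv ν hw)]
  have key : ∀ t : ℝ, ‖(z - (t:ℂ))⁻¹ - (w - (t:ℂ))⁻¹‖ ≤ ‖z - w‖ := by
    intro t
    have hz0 := sub_ofReal_ne_zero hz t
    have hw0 := sub_ofReal_ne_zero hw t
    have e : (z - (t:ℂ))⁻¹ - (w - (t:ℂ))⁻¹ = (w - z) * ((z - (t:ℂ))⁻¹ * (w - (t:ℂ))⁻¹) := by
      field_simp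
      ring
    rw [e, norm_mul, norm_mul]
    have h1 : ‖((z : ℂ) - (t:ℂ))⁻¹‖ ≤ 1 := norm_inv_le_one hz t
    have h2 : ‖((w : ℂ) - (t:ℂ))⁻¹‖ ≤ 1 := norm_inv_le_one hw t
    have h3 : ‖w - z‖ = ‖z - w‖ := by
      rw [norm_sub_rev]
    calc ‖w - z‖ * (‖(z - (t:ℂ))⁻¹‖ * ‖(w - (t:ℂ))⁻¹‖)
        ≤ ‖w - z‖ * (1 * 1) := by
          have := mul_le_one₀ h1 (norm_nonneg _) h2
          nlinarith [norm_nonneg (w - z), mul_nonneg (norm_nonneg ((z - (t:ℂ))⁻¹)) (norm_nonneg ((w - (t:ℂ))⁻¹))]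
      _ = ‖z - w‖ := by rw [mul_one, mul_one, h3]
  calc ‖∫ t, ((z - (t:ℂ))⁻¹ - (w - (t:ℂ))⁻¹) ∂ν‖
      = ‖∫ t, ((z - (t:ℂ))⁻¹ - (w - (t:ℂ))⁻¹) ∂ν‖ := rfl
    _ ≤ ∫ t, ‖(z - (t:ℂ))⁻¹ - (w - (t:ℂ))⁻¹‖ ∂ν := norm_integral_le_integral_norm _
    _ ≤ ∫ _t, ‖z - w‖ ∂ν := by
        refine integral_mono ((integrable_inv ν hz).sub (integrable_inv ν hw)).norm
          (integrable_const _) key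
    _ = ‖z - w‖ := by simp

lemma cauchyT_im_bound (ν : Measure ℝ) [IsProbabilityMeasure ν] {z : ℂ} (hz : 1 ≤ z.im) :
    ‖cauchyT ν z‖ ≤ (z.im)⁻¹ := by
  calc ‖cauchyT ν z‖ ≤ ∫ t, ‖(z - (t:ℂ))⁻¹‖ ∂ν := by
        rw [cauchyT]
        exact norm_integral_le_integral_norm (fun t : ℝ => (z - (t:ℂ))⁻¹)
    _ ≤ ∫ _t, (z.im)⁻¹ ∂ν :=
        integral_mono (integrable_inv ν hz).norm (integrable_const _) (norm_inv_le_im hz)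
    _ = (z.im)⁻¹ := by simp



lemma cauchyT_tendsto (μs : ℕ → Measure ℝ) (μ : Measure ℝ)
    [IsProbabilityMeasure μ] [∀ n, IsProbabilityMeasure (μs n)]
    (hweak : ∀ f : BoundedContinuousFunction ℝ ℝ,
      Tendsto (fun n => ∫ x, f x ∂(μs n)) atTop (nhds (∫ x, f x ∂μ)))
    {z : ℂ} (hz : 1 ≤ z.im) :
    Tendsto (fun n => cauchyT (μs n) z) atTop (nhds (cauchyT μ z)) := by
  have hc := cont_inv z hz
  have hre : Continuous fun t : ℝ => ((z - (t:ℂ))⁻¹).re := Complex.continuous_re.comp hc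
  have him : Continuous fun t : ℝ => ((z - (t:ℂ))⁻¹).im := Complex.continuous_im.comp hc
  have hbre : ∀ t : ℝ, ‖((z - (t:ℂ))⁻¹).re‖ ≤ 1 := fun t =>
    (Complex.abs_re_le_norm _).trans (norm_inv_le_one hz t)
  have hbim : ∀ t : ℝ, ‖((z - (t:ℂ))⁻¹).im‖ ≤ 1 := fun t =>
    (Complex.abs_im_le_norm _).trans (norm_inv_le_one hz t)
  set Fre := BoundedContinuousFunction.ofNormedAddCommGroup _ hre 1 hbre with hFre
  set Fim := BoundedContinuousFunction.ofNormedAddCommGroup _ him 1 hbim with hFim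
  have h1 := hweak Fre
  have h2 := hweak Fim
  simp only [hFre, hFim, BoundedContinuousFunction.coe_ofNormedAddCommGroup] at h1 h2
  have key : ∀ (ν : Measure ℝ) [IsProbabilityMeasure ν],
      ((∫ t, ((z - (t:ℂ))⁻¹).re ∂ν : ℝ) : ℂ) + ((∫ t, ((z - (t:ℂ))⁻¹).im ∂ν : ℝ) : ℂ) * Complex.I
        = cauchyT ν z := by
    intro ν _
    have := integral_re_add_im (μ := ν) (𝕜 := ℂ) (integrable_inv ν hz)
    simpa [RCLike.re_to_complex, RCLike.im_to_complex, RCLike.I_to_complex, cauchyT] using this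
  have hten : Tendsto (fun n =>
      ((∫ t, ((z - (t:ℂ))⁻¹).re ∂(μs n) : ℝ) : ℂ)
        + ((∫ t, ((z - (t:ℂ))⁻¹).im ∂(μs n) : ℝ) : ℂ) * Complex.I) atTop
      (nhds (((∫ t, ((z - (t:ℂ))⁻¹).re ∂μ : ℝ) : ℂ)
        + ((∫ t, ((z - (t:ℂ))⁻¹).im ∂μ : ℝ) : ℂ) * Complex.I)) := by
    exact ((Complex.continuous_ofReal.tendsto _).comp h1).add
      (((Complex.continuous_ofReal.tendsto _).comp h2).mul_const Complex.I)
  rw [key μ] at hten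
  refine hten.congr fun n => key (μs n)


noncomputable def tailFun (M : ℝ) (x : ℝ) : ℝ := max 0 (min 1 (|x| - M))

lemma tailFun_cont (M : ℝ) : Continuous (tailFun M) := by
  unfold tailFun; fun_prop

lemma tailFun_nonneg (M x : ℝ) : 0 ≤ tailFun M x := le_max_left _ _

lemma tailFun_le_one (M x : ℝ) : tailFun M x ≤ 1 := by
  unfold tailFun
  rcases le_total (min 1 (|x| - M)) 0 with h | h
  · simpa [max_eq_left h] using zero_le_one
  · rw [max_eq_right h]; exact min_le_left _ _

lemma tailFun_norm_le (M x : ℝ) : ‖tailFun M x‖ ≤ 1 := by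
  rw [Real.norm_eq_abs, _root_.abs_of_nonneg (tailFun_nonneg M x)]; exact tailFun_le_one M x

lemma tailFun_le_indicator (M : ℝ) (x : ℝ) :
    tailFun M x ≤ (Set.Icc (-M) M)ᶜ.indicator (1 : ℝ → ℝ) x := by
  by_cases hx : x ∈ Set.Icc (-M) M
  · have hax : |x| ≤ M := abs_le.mpr ⟨hx.1, hx.2⟩
    have : tailFun M x = 0 := by
      unfold tailFun
      rw [max_eq_left]
      exact (min_le_right _ _).trans (by linarith)
    rw [this, Set.indicator_of_notMem (by simpa using hx)]
  · rw [Set.indicator_of_mem (by simpa using hx)]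
    exact tailFun_le_one M x

lemma indicator_le_tailFun {M : ℝ} (hM : 0 ≤ M) (x : ℝ) :
    (Set.Icc (-(M+1)) (M+1))ᶜ.indicator (1 : ℝ → ℝ) x ≤ tailFun M x := by
  by_cases hx : x ∈ Set.Icc (-(M+1)) (M+1)
  · rw [Set.indicator_of_notMem (by simpa using hx)]
    exact tailFun_nonneg M x
  · rw [Set.indicator_of_mem (by simpa using hx)]
    have hax : M + 1 < |x| := by
      rw [Set.mem_Icc, not_and_or] at hx
      push_neg at hx
      rcases hx with h | h
      · rw [abs_of_neg (by linarith)]; linarith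
      · rw [abs_of_pos (by linarith)]; linarith
    unfold tailFun
    rw [min_eq_left (by linarith), max_eq_right (by linarith)]
    simp

lemma integrable_tailFun (ν : Measure ℝ) [IsProbabilityMeasure ν] (M : ℝ) :
    Integrable (tailFun M) ν :=
  ⟨(tailFun_cont M).aestronglyMeasurable,
    HasFiniteIntegral.of_bounded (C := 1) (Eventually.of_forall (tailFun_norm_le M))⟩

lemma integrable_indicator_one (ν : Measure ℝ) [IsProbabilityMeasure ν] {s : Set ℝ}
    (hs : MeasurableSet s) : Integrable (s.indicator fun _ => (1:ℝ)) ν :=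
  ((integrable_const (1:ℝ)).indicator hs : _)

lemma tail_integral_le (ν : Measure ℝ) [IsProbabilityMeasure ν] (M : ℝ) :
    ∫ x, tailFun M x ∂ν ≤ (ν (Set.Icc (-M) M)ᶜ).toReal := by
  have hs : MeasurableSet (Set.Icc (-M) M)ᶜ := measurableSet_Icc.compl
  calc ∫ x, tailFun M x ∂ν
      ≤ ∫ x, (Set.Icc (-M) M)ᶜ.indicator (1 : ℝ → ℝ) x ∂ν :=
        integral_mono (integrable_tailFun ν M) (integrable_indicator_one ν hs)
          (tailFun_le_indicator M)
    _ = (ν (Set.Icc (-M) M)ᶜ).toReal := by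
        rw [integral_indicator_one hs]; rfl

lemma le_tail_integral (ν : Measure ℝ) [IsProbabilityMeasure ν] {M : ℝ} (hM : 0 ≤ M) :
    (ν (Set.Icc (-(M+1)) (M+1))ᶜ).toReal ≤ ∫ x, tailFun M x ∂ν := by
  have hs : MeasurableSet (Set.Icc (-(M+1)) (M+1))ᶜ := measurableSet_Icc.compl
  calc (ν (Set.Icc (-(M+1)) (M+1))ᶜ).toReal
      = ∫ x, (Set.Icc (-(M+1)) (M+1))ᶜ.indicator (1 : ℝ → ℝ) x ∂ν := by
        rw [integral_indicator_one hs]; rfl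
    _ ≤ ∫ x, tailFun M x ∂ν :=
        integral_mono (integrable_indicator_one ν hs) (integrable_tailFun ν M)
          (indicator_le_tailFun hM)

lemma exists_tail (μ : Measure ℝ) [IsProbabilityMeasure μ] {ε : ℝ} (hε : 0 < ε) :
    ∃ M : ℝ, 1 ≤ M ∧ (μ (Set.Icc (-M) M)ᶜ).toReal < ε := by
  have hA : Antitone (fun m : ℕ => (Set.Icc (-(m:ℝ)) (m:ℝ))ᶜ) := by
    intro a b hab
    apply Set.compl_subset_compl.mpr
    apply Set.Icc_subset_Icc <;> [norm_num; exact_mod_cast hab] <;> exact_mod_cast hab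
  have hInt : (⋂ m : ℕ, (Set.Icc (-(m:ℝ)) (m:ℝ))ᶜ) = ∅ := by
    ext x
    simp only [Set.mem_iInter, Set.mem_compl_iff, Set.mem_Icc, Set.mem_empty_iff_false,
      iff_false, not_forall, not_not]
    obtain ⟨m, hm⟩ := exists_nat_ge |x|
    exact ⟨m, (abs_le.mp hm).1, (abs_le.mp hm).2⟩
  have hten := tendsto_measure_iInter_atTop (μ := μ)
    (s := fun m : ℕ => (Set.Icc (-(m:ℝ)) (m:ℝ))ᶜ)
    (fun m => (measurableSet_Icc.compl).nullMeasurableSet)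
    hA ⟨0, measure_ne_top μ _⟩
  rw [hInt, measure_empty] at hten
  have hev : ∀ᶠ m : ℕ in atTop, μ (Set.Icc (-(m:ℝ)) (m:ℝ))ᶜ < ENNReal.ofReal ε := by
    exact hten.eventually_lt_const (by simp [ENNReal.ofReal_pos, hε])
  obtain ⟨m, hm⟩ := (hev.and (eventually_ge_atTop 1)).exists
  refine ⟨m, by exact_mod_cast hm.2, ?_⟩
  exact ENNReal.toReal_lt_of_lt_ofReal hm.1


lemma cauchyT_far (ν : Measure ℝ) [IsProbabilityMeasure ν] {z : ℂ} (hz : 1 ≤ z.im)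
    {K R : ℝ} (hRK : 0 < R - K) (hre : R ≤ |z.re|) :
    ‖cauchyT ν z‖ ≤ (R - K)⁻¹ + (ν (Set.Icc (-K) K)ᶜ).toReal := by
  have hs : MeasurableSet (Set.Icc (-K) K)ᶜ := measurableSet_Icc.compl
  have hpt : ∀ t : ℝ, ‖(z - (t:ℂ))⁻¹‖ ≤ (R - K)⁻¹ + (Set.Icc (-K) K)ᶜ.indicator (1 : ℝ → ℝ) t := by
    intro t
    by_cases ht : t ∈ Set.Icc (-K) K
    · rw [Set.indicator_of_notMem (by simpa using ht), add_zero]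
      have hat : |t| ≤ K := abs_le.mpr ⟨ht.1, ht.2⟩
      have h1 : R - K ≤ |z.re - t| := by
        have := abs_sub_abs_le_abs_sub z.re t
        linarith [abs_sub_abs_le_abs_sub z.re t]
      have h2 : |z.re - t| ≤ ‖z - (t:ℂ)‖ := by
        have := Complex.abs_re_le_norm (z - (t:ℂ))
        simpa [Complex.sub_re] using this
      rw [norm_inv]
      have hpos : (0:ℝ) < R - K := by linarith
      exact inv_anti₀ hpos (h1.trans h2)
    · rw [Set.indicator_of_mem (by simpa using ht)]
      have := norm_inv_le_one hz t
      have : (0:ℝ) ≤ (R - K)⁻¹ := le_of_lt (inv_pos.mpr hRK)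
      simp only [Pi.one_apply]
      linarith [norm_inv_le_one hz t]
  have hint : Integrable (fun t => (R - K)⁻¹ + (Set.Icc (-K) K)ᶜ.indicator (1 : ℝ → ℝ) t) ν :=
    (integrable_const _).add ((integrable_const (1:ℝ)).indicator hs)
  calc ‖cauchyT ν z‖
      ≤ ∫ t, ‖(z - (t:ℂ))⁻¹‖ ∂ν := by
        rw [cauchyT]; exact norm_integral_le_integral_norm (fun t : ℝ => (z - (t:ℂ))⁻¹)
    _ ≤ ∫ t, ((R - K)⁻¹ + (Set.Icc (-K) K)ᶜ.indicator (1 : ℝ → ℝ) t) ∂ν :=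
        integral_mono (integrable_inv ν hz).norm hint hpt
    _ = (R - K)⁻¹ + (ν (Set.Icc (-K) K)ᶜ).toReal := by
        have e1 : ∫ t, ((R - K)⁻¹ + (Set.Icc (-K) K)ᶜ.indicator (1 : ℝ → ℝ) t) ∂ν
            = (∫ _t, (R - K)⁻¹ ∂ν) + ∫ t, (Set.Icc (-K) K)ᶜ.indicator (1 : ℝ → ℝ) t ∂ν :=
          integral_add (integrable_const _) ((integrable_const (1:ℝ)).indicator hs)
        rw [e1, integral_const, integral_indicator_one hs]
        simp
        rfl


set_option maxHeartbeats 1000000 in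
/-- if a sequence of symmetric probability measures `μ_n` converges
weakly to a symmetric probability measure `μ`, then the Cauchy transforms
`G_{μ_n}` converge to `G_μ` uniformly on `{z : Im z ≥ 1}`. -/
theorem cauchy_uniform_convergence (μs : ℕ → Measure ℝ) (μ : Measure ℝ)
    [IsProbabilityMeasure μ] [∀ n, IsProbabilityMeasure (μs n)]
    (hsym : ∀ n, IsSymmetricMeasure (μs n)) (hμsym : IsSymmetricMeasure μ)
    (hweak : ∀ f : BoundedContinuousFunction ℝ ℝ,
      Filter.Tendsto (fun n => ∫ x, f x ∂(μs n)) Filter.atTop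
        (nhds (∫ x, f x ∂μ))) :
    ∀ ε : ℝ, 0 < ε → ∃ N : ℕ, ∀ n ≥ N, ∀ z : ℂ, 1 ≤ z.im →
      ‖cauchyT (μs n) z - cauchyT μ z‖ < ε := by
  intro ε hε
  obtain ⟨M, hM1, hMμ⟩ := exists_tail μ (show (0:ℝ) < ε/16 by positivity)
  have hM0 : (0:ℝ) ≤ M := by linarith
  -- eventual tail bound for μs n at level K = M+1
  have htailF : ∀ᶠ n in atTop, ((μs n) (Set.Icc (-(M+1)) (M+1))ᶜ).toReal < ε/8 := by
    have h := hweak (BoundedContinuousFunction.ofNormedAddCommGroup _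
      (tailFun_cont M) 1 (fun x => tailFun_norm_le M x))
    simp only [BoundedContinuousFunction.coe_ofNormedAddCommGroup] at h
    have hμint : ∫ x, tailFun M x ∂μ < ε/8 :=
      lt_of_le_of_lt (tail_integral_le μ M) (by linarith)
    filter_upwards [h.eventually_lt_const hμint] with n hn
    exact lt_of_le_of_lt (le_tail_integral (μs n) hM0) hn
  have hμtail : (μ (Set.Icc (-(M+1)) (M+1))ᶜ).toReal < ε/8 := by
    have hsub : (Set.Icc (-(M+1)) (M+1))ᶜ ⊆ (Set.Icc (-M) M)ᶜ :=
      Set.compl_subset_compl.mpr (Set.Icc_subset_Icc (by linarith) (by linarith))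
    have := ENNReal.toReal_mono (measure_ne_top μ _) (measure_mono hsub)
    linarith
  set δ : ℝ := ε/8 with hδdef
  have hδ : (0:ℝ) < δ := by positivity
  set T : ℝ := 8/ε with hTdef
  have hT : (0:ℝ) < T := by positivity
  set R : ℝ := (M+1) + 8/ε with hRdef
  have hRK : (0:ℝ) < R - (M+1) := by rw [hRdef]; ring_nf; positivity
  have hRKinv : (R - (M+1))⁻¹ = ε/8 := by
    have : R - (M+1) = 8/ε := by rw [hRdef]; ring
    rw [this, inv_div]
  have hTinv : T⁻¹ = ε/8 := by rw [hTdef, inv_div]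
  set A : ℤ := ⌈R/δ⌉ with hAdef
  set B : ℤ := ⌈(T-1)/δ⌉ with hBdef
  set grid : ℤ × ℤ → ℂ := fun p => ⟨(p.1 : ℝ) * δ, 1 + (p.2 : ℝ) * δ⟩ with hgriddef
  have hgim : ∀ p : ℤ × ℤ, (0:ℤ) ≤ p.2 → 1 ≤ (grid p).im := by
    intro p hp
    have : (0:ℝ) ≤ (p.2 : ℝ) := by exact_mod_cast hp
    simp only [hgriddef]
    nlinarith
  set S : Finset (ℤ × ℤ) := Finset.Icc (-A) A ×ˢ Finset.Icc 0 B with hSdef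
  have hpt : ∀ p ∈ S, ∀ᶠ n in atTop,
      ‖cauchyT (μs n) (grid p) - cauchyT μ (grid p)‖ < ε/8 := by
    intro p hp
    have hp2 : (0:ℤ) ≤ p.2 := (Finset.mem_Icc.mp (Finset.mem_product.mp hp).2).1
    have him := hgim p hp2
    have h := cauchyT_tendsto μs μ hweak him
    have hd : ∀ᶠ n in atTop, dist (cauchyT (μs n) (grid p)) (cauchyT μ (grid p)) < ε/8 :=
      Metric.tendsto_nhds.mp h (ε/8) (by positivity)
    filter_upwards [hd] with n hn
    rwa [Complex.dist_eq] at hn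
  obtain ⟨N, hN⟩ := eventually_atTop.mp (((eventually_all_finset S).mpr hpt).and htailF)
  refine ⟨N, fun n hn z hz => ?_⟩
  obtain ⟨hgridN, htl⟩ := hN n hn
  by_cases hfar : R ≤ |z.re| ∨ T ≤ z.im
  · -- far region : both transforms are small
    have hsmall : ∀ (ν : Measure ℝ) [IsProbabilityMeasure ν],
        (ν (Set.Icc (-(M+1)) (M+1))ᶜ).toReal < ε/8 →
        ‖cauchyT ν z‖ ≤ ε/4 := by
      intro ν _ hνt
      rcases hfar with h | h
      · have := cauchyT_far ν hz hRK h
        rw [hRKinv] at this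
        linarith
      · have h1 := cauchyT_im_bound ν hz
        have h2 : (z.im)⁻¹ ≤ T⁻¹ := inv_anti₀ hT h
        rw [hTinv] at h2
        linarith
    have h1 := hsmall (μs n) htl
    have h2 := hsmall μ hμtail
    calc ‖cauchyT (μs n) z - cauchyT μ z‖
        = ‖cauchyT (μs n) z - cauchyT μ z‖ := rfl
      _ ≤ ‖cauchyT (μs n) z‖ + ‖cauchyT μ z‖ := norm_sub_le _ _
      _ ≤ ε/4 + ε/4 := add_le_add h1 h2
      _ < ε := by linarith
  · push_neg at hfar
    obtain ⟨hreR, himT⟩ := hfar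
    have habsre : -R < z.re ∧ z.re < R := abs_lt.mp hreR
    set a : ℤ := ⌊z.re/δ⌋ with hadef
    set b : ℤ := ⌊(z.im - 1)/δ⌋ with hbdef
    have hmem : (a, b) ∈ S := by
      rw [hSdef, Finset.mem_product]
      constructor
      · rw [Finset.mem_Icc]
        constructor
        · rw [hadef, hAdef, ← Int.floor_neg]
          refine Int.floor_le_floor ?_
          rw [← neg_div]
          have h := le_of_lt habsre.1
          gcongr
        · rw [hadef, hAdef]
          refine (Int.floor_le_floor ?_).trans (Int.floor_le_ceil _)
          have h := le_of_lt habsre.2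
          gcongr
      · rw [Finset.mem_Icc]
        constructor
        · rw [hbdef]
          exact Int.floor_nonneg.mpr (div_nonneg (by linarith) hδ.le)
        · rw [hbdef, hBdef]
          refine (Int.floor_le_floor ?_).trans (Int.floor_le_ceil _)
          have h : z.im - 1 ≤ T - 1 := by linarith
          gcongr
    have hb0 : (0:ℤ) ≤ b := by
      rw [hbdef]; exact Int.floor_nonneg.mpr (div_nonneg (by linarith) hδ.le)
    have hwim : 1 ≤ (grid (a, b)).im := hgim _ hb0
    have hclose : ‖z - grid (a, b)‖ ≤ 2*δ := by
      have hre1 : (a:ℝ) ≤ z.re/δ := Int.floor_le _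
      have hre2 : z.re/δ < a + 1 := Int.lt_floor_add_one _
      have him1 : (b:ℝ) ≤ (z.im - 1)/δ := Int.floor_le _
      have him2 : (z.im - 1)/δ < b + 1 := Int.lt_floor_add_one _
      have e1 : (z - grid (a, b)).re = z.re - (a:ℝ)*δ := by
        simp [hgriddef, Complex.sub_re]
      have e2 : (z - grid (a, b)).im = (z.im - 1) - (b:ℝ)*δ := by
        simp [hgriddef, Complex.sub_im]; ring
      have hre3 : (a:ℝ)*δ ≤ z.re := by
        have := mul_le_mul_of_nonneg_right hre1 (le_of_lt hδ)
        rwa [div_mul_cancel₀ _ (ne_of_gt hδ)] at this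
      have hre4 : z.re < ((a:ℝ)+1)*δ := by
        have := mul_lt_mul_of_pos_right hre2 hδ
        rwa [div_mul_cancel₀ _ (ne_of_gt hδ)] at this
      have him3 : (b:ℝ)*δ ≤ z.im - 1 := by
        have := mul_le_mul_of_nonneg_right him1 (le_of_lt hδ)
        rwa [div_mul_cancel₀ _ (ne_of_gt hδ)] at this
      have him4 : z.im - 1 < ((b:ℝ)+1)*δ := by
        have := mul_lt_mul_of_pos_right him2 hδ
        rwa [div_mul_cancel₀ _ (ne_of_gt hδ)] at this
      calc ‖z - grid (a, b)‖
          ≤ |(z - grid (a, b)).re| + |(z - grid (a, b)).im| :=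
            Complex.norm_le_abs_re_add_abs_im _
        _ ≤ δ + δ := by
            rw [e1, e2]
            have ra : ((a:ℝ)+1)*δ = (a:ℝ)*δ + δ := by ring
            have rb : ((b:ℝ)+1)*δ = (b:ℝ)*δ + δ := by ring
            have h1 : |z.re - (a:ℝ)*δ| ≤ δ := abs_le.mpr ⟨by linarith, by linarith⟩
            have h2 : |(z.im - 1) - (b:ℝ)*δ| ≤ δ := abs_le.mpr ⟨by linarith, by linarith⟩
            exact add_le_add h1 h2
        _ = 2*δ := by ring
    have l1 := cauchyT_lip (μs n) hz hwim
    have l2 := cauchyT_lip μ hwim hz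
    have l3 := hgridN (a, b) hmem
    have habswz : ‖grid (a, b) - z‖ = ‖z - grid (a, b)‖ :=
      norm_sub_rev _ _
    calc ‖cauchyT (μs n) z - cauchyT μ z‖
        ≤ ‖cauchyT (μs n) z - cauchyT (μs n) (grid (a, b))‖
          + ‖cauchyT (μs n) (grid (a, b)) - cauchyT μ z‖ :=
          norm_sub_le_norm_sub_add_norm_sub _ _ _
      _ ≤ ‖cauchyT (μs n) z - cauchyT (μs n) (grid (a, b))‖
          + (‖cauchyT (μs n) (grid (a, b)) - cauchyT μ (grid (a, b))‖
            + ‖cauchyT μ (grid (a, b)) - cauchyT μ z‖) := by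
          gcongr
          exact norm_sub_le_norm_sub_add_norm_sub _ _ _
      _ ≤ 2*δ + (ε/8 + 2*δ) := by
          refine add_le_add (l1.trans hclose) (add_le_add (le_of_lt l3) ?_)
          exact l2.trans (habswz ▸ hclose)
      _ < ε := by rw [hδdef]; linarith
end
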